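/- arXiv:1205.7062 — 6 statements merged into one kernel-verified Lean document; each statement's English description precedes it below -/
import Mathlib

section
/- Fix A > 0. There exist n₀ and A' (depending only on A) such that for every integer n ≥ n₀ the following holds: if F is analytic on the closed disc D = { t ∈ ℂ : |t| ≤ (log n)^{1/2} }, satisfies |F(t)| ≤ 2√n for all t ∈ D, and satisfies |F(t) e^{−t²/2} − 1| ≤ A n^{-1} (log n)^{3/2} for all real t ∈ [−(log n)^{1/2}, (log n)^{1/2}], then |F(t) e^{−t²/2} − 1| ≤ A' n^{-1/2} (log n)^{3/2} for all complex t with |t| ≤ (1/7)(log n)^{1/2}. In particular, this applies to F(t) = E{ e^{t X_n} } for a sequence of real random variables X_n whose moment generating functions satisfy these hypotheses. -/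
open Real Metric

noncomputable section


set_option maxHeartbeats 1200000 in
lemma upper_half_bound (R m M : ℝ) (hR : 0 < R) (hm : 0 < m) (hmM : m ≤ M)
    (G : ℂ → ℂ)
    (hd : ∀ z ∈ ball (0:ℂ) R, DifferentiableAt ℂ G z)
    (hcont : ContinuousOn G (closedBall (0:ℂ) R))
    (hb : ∀ z ∈ closedBall (0:ℂ) R, ‖G z‖ ≤ M)
    (hs : ∀ t : ℝ, |t| ≤ R → ‖G (t:ℂ)‖ ≤ m) :
    ∀ z : ℂ, ‖z‖ ≤ R / 7 → 0 < z.im →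
      ‖G z‖ ≤ 49 / 24 * m * (M / m) ^ ((1:ℝ)/4) := by
  have hM : 0 < M := lt_of_lt_of_le hm hmM
  set c : ℝ := 2 / π * Real.log (M / m) with hc_def
  have hc0 : 0 ≤ c := by
    apply mul_nonneg (by positivity)
    exact Real.log_nonneg ((one_le_div hm).2 hmM)
  set v : ℂ → ℂ := fun z => ((R:ℂ) + z) / ((R:ℂ) - z) with hv_def
  set Φ : ℂ → ℂ := fun z => Complex.exp (Complex.I * (c:ℂ) * Complex.log (v z)) with hΦ_def
  set κ : ℂ → ℂ := fun z => ((R:ℂ)^2 - z^2) / (2*(R:ℂ)^2) with hκ_def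
  set Ψ : ℂ → ℂ := fun z => G z * κ z * Φ z with hΨ_def
  -- re and im of v
  have hvre : ∀ z : ℂ, (v z).re = (R^2 - Complex.normSq z) / Complex.normSq ((R:ℂ) - z) := by
    intro z
    rw [hv_def]
    simp only [Complex.div_re, Complex.add_re, Complex.sub_re, Complex.ofReal_re,
      Complex.add_im, Complex.sub_im, Complex.ofReal_im, Complex.normSq_apply]
    rw [← add_div]
    congr 1
    ring
  have hvim : ∀ z : ℂ, (v z).im = 2 * R * z.im / Complex.normSq ((R:ℂ) - z) := by
    intro z
    rw [hv_def]
    simp only [Complex.div_im, Complex.add_re, Complex.sub_re, Complex.ofReal_re,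
      Complex.add_im, Complex.sub_im, Complex.ofReal_im, Complex.normSq_apply]
    rw [div_sub_div_same]
    congr 1
    ring
  -- nonnegativity of re, im of v on the relevant region
  have hvre0 : ∀ z ∈ closedBall (0:ℂ) R, 0 ≤ (v z).re := by
    intro z hz
    rw [hvre]
    apply div_nonneg _ (Complex.normSq_nonneg _)
    have h1 : ‖z‖ ≤ R := by
      rwa [← mem_closedBall_zero_iff]
    have : Complex.normSq z ≤ R^2 := by
      rw [Complex.normSq_eq_norm_sq]
      nlinarith [norm_nonneg z]
    linarith
  have hvim0 : ∀ z : ℂ, 0 ≤ z.im → 0 ≤ (v z).im := by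
    intro z hz
    rw [hvim]
    apply div_nonneg _ (Complex.normSq_nonneg _)
    positivity
  -- norm of Φ
  have hΦnorm : ∀ z : ℂ, ‖Φ z‖ = Real.exp (-(c * Complex.arg (v z))) := by
    intro z
    rw [hΦ_def]
    simp only [Complex.norm_exp]
    congr 1
    simp only [Complex.mul_re, Complex.mul_im, Complex.I_re, Complex.I_im,
      Complex.ofReal_re, Complex.ofReal_im, Complex.log_im]
    ring
  have hΦle1 : ∀ z ∈ closedBall (0:ℂ) R, 0 ≤ z.im → ‖Φ z‖ ≤ 1 := by
    intro z hz him
    rw [hΦnorm]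
    rw [show (1:ℝ) = Real.exp 0 by simp]
    apply Real.exp_le_exp.2
    simp only [neg_nonpos]
    exact mul_nonneg hc0 (Complex.arg_nonneg_iff.2 (hvim0 z him))
  have hκle : ∀ z ∈ closedBall (0:ℂ) R, ‖κ z‖ ≤ 1 := by
    intro z hz
    rw [hκ_def]
    simp only [norm_div]
    have h2R : ‖2*(R:ℂ)^2‖ = 2*R^2 := by
      rw [norm_mul, norm_pow, Complex.norm_real, Real.norm_eq_abs, abs_of_pos hR]
      norm_num
    rw [div_le_one (by rw [h2R]; positivity)]
    calc ‖(R:ℂ)^2 - z^2‖ ≤ ‖(R:ℂ)^2‖ + ‖z^2‖ := norm_sub_le _ _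
      _ ≤ R^2 + R^2 := by
          have h1 : ‖(R:ℂ)^2‖ = R^2 := by
            rw [norm_pow, Complex.norm_real, Real.norm_eq_abs, abs_of_pos hR]
          have h2 : ‖z^2‖ ≤ R^2 := by
            rw [norm_pow]
            have := mem_closedBall_zero_iff.1 hz
            nlinarith [norm_nonneg z]
          linarith
      _ ≤ ‖2*(R:ℂ)^2‖ := by rw [h2R]; linarith
  -- the open region: upper half of the ball
  set U : Set ℂ := ball (0:ℂ) R ∩ {z : ℂ | 0 < z.im} with hU_def
  have hclosed_half : IsClosed {z : ℂ | 0 ≤ z.im} :=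
    isClosed_le continuous_const Complex.continuous_im
  have hKsub : closure U ⊆ closedBall (0:ℂ) R ∩ {z : ℂ | 0 ≤ z.im} := by
    refine (closure_inter_subset_inter_closure _ _).trans (Set.inter_subset_inter ?_ ?_)
    · rw [closure_ball (0:ℂ) hR.ne']
    · exact closure_minimal (fun x hx => show (0:ℝ) ≤ Complex.im x from le_of_lt hx) hclosed_half
  have hfr : frontier U ⊆ (sphere (0:ℂ) R ∩ {z : ℂ | 0 ≤ z.im}) ∪
      (closedBall (0:ℂ) R ∩ {z : ℂ | z.im = 0}) := by
    have h1 := frontier_inter_subset (ball (0:ℂ) R) {z : ℂ | 0 < z.im}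
    rw [frontier_ball (0:ℂ) hR.ne', closure_ball (0:ℂ) hR.ne'] at h1
    refine h1.trans (Set.union_subset_union (Set.inter_subset_inter_right _ ?_) ?_)
    · exact closure_minimal (fun x hx => show (0:ℝ) ≤ Complex.im x from le_of_lt hx) hclosed_half
    · rintro w ⟨hw1, hw2⟩
      have hopen : IsOpen {z : ℂ | 0 < z.im} := isOpen_lt continuous_const Complex.continuous_im
      rw [hopen.frontier_eq] at hw2
      obtain ⟨h1', h2'⟩ := hw2
      have h3' : 0 ≤ w.im :=
        closure_minimal (fun x hx => show (0:ℝ) ≤ Complex.im x from le_of_lt hx) hclosed_half h1'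
      have h4' : ¬ (0 < w.im) := h2'
      exact ⟨hw1, le_antisymm (not_lt.1 h4') h3'⟩
  have hnormker : ∀ w : ℂ, ‖Ψ w‖ = ‖G w‖ * ‖κ w‖ * ‖Φ w‖ := by
    intro w; rw [hΨ_def]; simp only [norm_mul]
  have h2R : ‖2*(R:ℂ)^2‖ = 2*R^2 := by
    rw [norm_mul, norm_pow, Complex.norm_real, Real.norm_eq_abs, abs_of_pos hR]
    norm_num
  have hfront : ∀ w ∈ frontier U, ‖Ψ w‖ ≤ m := by
    intro w hw
    rcases hfr hw with ⟨hw1, hw2⟩ | ⟨hw1, hw2⟩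
    · -- w on the sphere, with im ≥ 0
      have hwball : w ∈ closedBall (0:ℂ) R := sphere_subset_closedBall hw1
      have hwn : ‖w‖ = R := mem_sphere_zero_iff_norm.1 hw1
      have hns : Complex.normSq w = R^2 := by
        rw [Complex.normSq_eq_norm_sq, hwn]
      rcases eq_or_lt_of_le (show (0:ℝ) ≤ w.im from hw2) with h0 | h0
      · -- corner points : κ w = 0
        have hre2 : w.re^2 = R^2 := by
          have := Complex.normSq_apply w
          rw [hns] at this
          nlinarith [this, h0.symm]
        have hweq : w = ((w.re : ℝ) : ℂ) := Complex.ext rfl (by simp [← h0])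
        have hκ0 : κ w = 0 := by
          rw [hκ_def]
          have hw2eq : w^2 = ((R:ℂ))^2 := by
            rw [hweq]
            rw [show ((w.re:ℝ):ℂ)^2 = ((w.re^2 : ℝ) : ℂ) by push_cast; ring]
            rw [hre2]; push_cast; ring
          simp [hw2eq]
        rw [hnormker, hκ0]
        simp [hm.le]
      · -- on the open半 semicircle: arg (v w) = π/2
        have hNpos : 0 < Complex.normSq ((R:ℂ) - w) := by
          rw [Complex.normSq_pos, sub_ne_zero]
          intro h
          rw [← h] at h0
          simp at h0
        have hvre_eq : (v w).re = 0 := by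
          rw [hvre, hns]; simp
        have hvim_pos : 0 < (v w).im := by
          rw [hvim]
          exact div_pos (by positivity) hNpos
        have harg : Complex.arg (v w) = π/2 :=
          Complex.arg_eq_pi_div_two_iff.2 ⟨hvre_eq, hvim_pos⟩
        have hΦw : ‖Φ w‖ = m / M := by
          rw [hΦnorm, harg, hc_def]
          rw [show -(2 / π * Real.log (M/m) * (π/2)) = -Real.log (M/m) by
            field_simp]
          rw [Real.exp_neg, Real.exp_log (by positivity), inv_div]
        rw [hnormker, hΦw]
        calc ‖G w‖ * ‖κ w‖ * (m/M) ≤ M * 1 * (m/M) := by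
              gcongr
              · exact hb w hwball
              · exact hκle w hwball
          _ = m := by field_simp
    · -- w on the real diameter
      have hre : |w.re| ≤ R := by
        have h1 := mem_closedBall_zero_iff.1 hw1
        exact le_trans (by exact Complex.abs_re_le_norm w) h1
      have hweq : w = ((w.re : ℝ) : ℂ) := Complex.ext rfl (by simpa using hw2)
      rw [hnormker]
      calc ‖G w‖ * ‖κ w‖ * ‖Φ w‖ ≤ m * 1 * 1 := by
            gcongr
            · rw [hweq]; exact hs w.re hre
            · exact hκle w hw1
            · exact hΦle1 w hw1 (le_of_eq hw2.symm)
        _ = m := by ring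
  -- differentiability ingredients
  have hκcont : Continuous κ := by
    rw [hκ_def]
    exact (continuous_const.sub (continuous_pow 2)).div_const _
  have hκdiff : ∀ z : ℂ, DifferentiableAt ℂ κ z := by
    intro z
    rw [hκ_def]
    exact ((differentiableAt_const _).sub (differentiableAt_pow 2)).div_const _
  have hRz : ∀ z : ℂ, z ≠ (R:ℂ) → (R:ℂ) - z ≠ 0 := by
    intro z hne h
    rw [sub_eq_zero] at h
    exact hne h.symm
  have hslit_ball : ∀ z ∈ ball (0:ℂ) R, 0 < (v z).re := by
    intro z hz
    have hzn : ‖z‖ < R := mem_ball_zero_iff.1 hz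
    have hzR : z ≠ (R:ℂ) := by
      intro h; rw [h] at hzn
      rw [Complex.norm_real, Real.norm_eq_abs, abs_of_pos hR] at hzn
      exact lt_irrefl _ hzn
    have hNpos : 0 < Complex.normSq ((R:ℂ) - z) := by
      rw [Complex.normSq_pos, sub_ne_zero]
      exact fun h => hzR h.symm
    rw [hvre]
    apply div_pos _ hNpos
    have h1 : ‖z‖ < R := by exact mem_ball_zero_iff.1 hz
    have : Complex.normSq z < R^2 := by
      rw [Complex.normSq_eq_norm_sq]
      nlinarith [norm_nonneg z]
    linarith
  have hΦdiff : ∀ z ∈ ball (0:ℂ) R, DifferentiableAt ℂ Φ z := by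
    intro z hz
    have hzn : ‖z‖ < R := mem_ball_zero_iff.1 hz
    have hzR : z ≠ (R:ℂ) := fun h => by
      rw [h, Complex.norm_real, Real.norm_eq_abs, abs_of_pos hR] at hzn
      exact lt_irrefl _ hzn
    have hvdiff : DifferentiableAt ℂ v z := by
      rw [hv_def]
      exact ((differentiableAt_const _).add differentiableAt_id).div
        ((differentiableAt_const _).sub differentiableAt_id)
        (hRz z hzR)
    rw [hΦ_def]
    apply DifferentiableAt.cexp
    exact (differentiableAt_const _).mul
      (hvdiff.clog (Or.inl (hslit_ball z hz)))
  have hdcc : DiffContOnCl ℂ Ψ U := by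
    constructor
    · intro z hz
      apply DifferentiableAt.differentiableWithinAt
      exact ((hd z hz.1).mul (hκdiff z)).mul (hΦdiff z hz.1)
    · -- continuity on closure U
      apply ContinuousOn.mono _ hKsub
      intro z hz
      obtain ⟨hz1, hz2⟩ := hz
      by_cases hcor : z = (R:ℂ) ∨ z = -(R:ℂ)
      · -- corner points
        have hκ0 : κ z = 0 := by
          simp only [hκ_def]
          rcases hcor with h | h <;> rw [h] <;> simp [neg_sq, sub_self]
        have hΨ0 : Ψ z = 0 := by simp only [hΨ_def]; rw [hκ0]; ring
        unfold ContinuousWithinAt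
        rw [hΨ0]
        have hbound : ∀ᶠ w in nhdsWithin z (closedBall (0:ℂ) R ∩ {z : ℂ | 0 ≤ z.im}),
            ‖Ψ w‖ ≤ M * ‖κ w‖ := by
          filter_upwards [eventually_mem_nhdsWithin] with w hw
          rw [hnormker]
          calc ‖G w‖ * ‖κ w‖ * ‖Φ w‖ ≤ M * ‖κ w‖ * 1 := by
                gcongr
                · exact hb w hw.1
                · exact hΦle1 w hw.1 hw.2
            _ = M * ‖κ w‖ := by ring
        have hlim : Filter.Tendsto (fun w => M * ‖κ w‖)
            (nhdsWithin z (closedBall (0:ℂ) R ∩ {z : ℂ | 0 ≤ z.im})) (nhds 0) := by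
          have h1 : Filter.Tendsto (fun w => M * ‖κ w‖) (nhds z) (nhds (M * ‖κ z‖)) :=
            (continuous_const.mul hκcont.norm).tendsto z
          rw [hκ0, norm_zero, mul_zero] at h1
          exact h1.mono_left nhdsWithin_le_nhds
        exact squeeze_zero_norm' hbound hlim
      · push_neg at hcor
        obtain ⟨hne1, hne2⟩ := hcor
        have hzn : ‖z‖ ≤ R := mem_closedBall_zero_iff.1 hz1
        have hslit : v z ∈ Complex.slitPlane := by
          rcases lt_or_eq_of_le hzn with h | h
          · exact Or.inl (hslit_ball z (mem_ball_zero_iff.2 h))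
          · -- on the sphere, im z > 0
            right
            have hns : Complex.normSq z = R^2 := by
              rw [Complex.normSq_eq_norm_sq, h]
            have him : 0 < z.im := by
              rcases lt_or_eq_of_le (show (0:ℝ) ≤ z.im from hz2) with h' | h'
              · exact h'
              · exfalso
                have hre2 : z.re^2 = R^2 := by
                  have := Complex.normSq_apply z
                  rw [hns] at this
                  nlinarith [this, h'.symm]
                have hor : z.re = R ∨ z.re = -R := by
                  have h2 : (z.re - R) * (z.re + R) = 0 := by nlinarith [hre2]
                  rcases mul_eq_zero.1 h2 with h3 | h3
                  · left; linarith
                  · right; linarith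
                have hzeq : z = ((z.re:ℝ):ℂ) := Complex.ext rfl (by simpa using h'.symm)
                rcases hor with h4 | h4
                · exact hne1 (by rw [hzeq, h4])
                · exact hne2 (by rw [hzeq, h4]; push_cast; ring)
            have hNpos : 0 < Complex.normSq ((R:ℂ) - z) := by
              rw [Complex.normSq_pos, sub_ne_zero]
              exact fun hh => hne1 hh.symm
            rw [hvim]
            positivity
        have hG : ContinuousWithinAt G (closedBall (0:ℂ) R ∩ {z : ℂ | 0 ≤ z.im}) z :=
          (hcont z hz1).mono Set.inter_subset_left
        have hΦc : ContinuousAt Φ z := by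
          have hvcont : ContinuousAt v z := by
            rw [hv_def]
            exact (continuous_const.add continuous_id).continuousAt.div
              (continuous_const.sub continuous_id).continuousAt
              (hRz z hne1)
          rw [hΦ_def]
          exact Complex.continuous_exp.continuousAt.comp
            ((continuousAt_const.mul ((continuousAt_clog hslit).comp hvcont)))
        exact (hG.mul (hκcont.continuousAt.continuousWithinAt)).mul
          hΦc.continuousWithinAt
  have hmax : ∀ w ∈ closure U, ‖Ψ w‖ ≤ m := fun w hw =>
    Complex.norm_le_of_forall_mem_frontier_norm_le
      (Metric.isBounded_ball.subset Set.inter_subset_left) hdcc hfront hw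
  -- now the interior estimate
  intro z hz him
  have hz7 : ‖z‖ < R := lt_of_le_of_lt hz (by linarith)
  have hzU : z ∈ U := ⟨mem_ball_zero_iff.2 hz7, him⟩
  have h1 : ‖Ψ z‖ ≤ m := hmax z (subset_closure hzU)
  have habsz : ‖z‖ ≤ R / 7 := by exact hz
  have hnsz : Complex.normSq z ≤ R^2/49 := by
    rw [Complex.normSq_eq_norm_sq]
    nlinarith [norm_nonneg z]
  -- lower bound for κ
  have hκlow : 24/49 ≤ ‖κ z‖ := by
    simp only [hκ_def]
    rw [norm_div, h2R, le_div_iff₀ (by positivity)]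
    have hz2 : ‖z^2‖ ≤ R^2/49 := by
      rw [norm_pow]
      nlinarith [norm_nonneg z]
    have hR2 : ‖(R:ℂ)^2‖ = R^2 := by
      rw [norm_pow, Complex.norm_real, Real.norm_eq_abs, abs_of_pos hR]
    calc 24/49 * (2*R^2) = R^2 - R^2/49 := by ring
      _ ≤ ‖(R:ℂ)^2‖ - ‖z^2‖ := by rw [hR2]; linarith
      _ ≤ ‖(R:ℂ)^2 - z^2‖ := norm_sub_norm_le _ _
  -- upper bound for arg (v z)
  have hvrepos : 0 < (v z).re := hslit_ball z (mem_ball_zero_iff.2 hz7)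
  have hvne : v z ≠ 0 := fun h => by rw [h] at hvrepos; simp at hvrepos
  have habsv : 0 < ‖v z‖ := norm_pos_iff.mpr hvne
  have hNpos : 0 < Complex.normSq ((R:ℂ) - z) := by
    rw [Complex.normSq_pos, sub_ne_zero]
    intro h
    rw [← h, Complex.norm_real, Real.norm_eq_abs, abs_of_pos hR] at hz7
    exact lt_irrefl _ hz7
  have h24 : 24 * (v z).im ≤ 7 * (v z).re := by
    rw [hvre, hvim]
    rw [← mul_div_assoc, ← mul_div_assoc, div_le_div_iff₀ hNpos hNpos]
    have him' : z.im ≤ R / 7 :=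
      le_trans (le_trans (le_abs_self _) (Complex.abs_im_le_norm z)) habsz
    have base : 24*(2*R*z.im) ≤ 7*(R^2 - Complex.normSq z) := by
      nlinarith [mul_le_mul_of_nonneg_left him' hR.le, hnsz]
    exact mul_le_mul_of_nonneg_right base (Complex.normSq_nonneg _)
  have hargle : Complex.arg (v z) ≤ π/8 := by
    rw [Complex.arg_of_re_nonneg hvrepos.le]
    have hx1 : (v z).im / ‖v z‖ ∈ Set.Icc (-1:ℝ) 1 := by
      constructor
      · rw [le_div_iff₀ habsv]
        nlinarith [Complex.abs_im_le_norm (v z), abs_nonneg (v z).im,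
          neg_abs_le (v z).im]
      · rw [div_le_one habsv]
        exact le_trans (le_abs_self _) (Complex.abs_im_le_norm (v z))
    have hy1 : π/8 ∈ Set.Icc (-(π/2)) (π/2) := by
      constructor <;> nlinarith [Real.pi_pos]
    rw [Real.arcsin_le_iff_le_sin hx1 hy1]
    have hsin : 7/24 ≤ Real.sin (π/8) := by
      have h8 : 0 < π/8 := by positivity
      have h8' : π/8 ≤ 1 := by nlinarith [Real.pi_le_four]
      have hsg := Real.sin_gt_sub_cube h8
      have hπ4 : π ≤ 4 := Real.pi_le_four
      have hπ0 : 0 < π := Real.pi_pos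
      have h2' : π^2 ≤ 16 := by nlinarith
      have hcube : π^3 ≤ 64 := by
        nlinarith [mul_le_mul_of_nonneg_left h2' hπ0.le]
      nlinarith [Real.pi_gt_three, hsg, hcube]
    have hdiv : (v z).im / ‖v z‖ ≤ 7/24 := by
      rw [div_le_iff₀ habsv]
      nlinarith [Complex.re_le_norm (v z)]
    linarith
  -- lower bound for Φ
  set P : ℝ := (M/m) ^ ((1:ℝ)/4) with hP_def
  have hPpos : 0 < P := Real.rpow_pos_of_pos (div_pos hM hm) _
  have hE : Real.exp (-(Real.log (M/m)/4)) = P⁻¹ := by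
    rw [hP_def, Real.rpow_def_of_pos (div_pos hM hm), ← Real.exp_neg]
    congr 1
    ring
  have hΦlow : P⁻¹ ≤ ‖Φ z‖ := by
    rw [hΦnorm, ← hE]
    apply Real.exp_le_exp.2
    rw [neg_le_neg_iff]
    calc c * Complex.arg (v z) ≤ c * (π/8) := by
          apply mul_le_mul_of_nonneg_left hargle hc0
      _ = Real.log (M/m)/4 := by
          rw [hc_def]
          field_simp
          ring
  -- combine everything
  have hGz : 0 ≤ ‖G z‖ := norm_nonneg _
  have h1' : ‖G z‖ * ‖κ z‖ * ‖Φ z‖ ≤ m := by rw [← hnormker]; exact h1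
  have step1 : ‖G z‖ * (24/49) * P⁻¹ ≤ m := by
    have t1 : ‖G z‖ * (24/49) ≤ ‖G z‖ * ‖κ z‖ := mul_le_mul_of_nonneg_left hκlow hGz
    calc ‖G z‖ * (24/49) * P⁻¹ ≤ ‖G z‖ * ‖κ z‖ * ‖Φ z‖ :=
          mul_le_mul t1 hΦlow (by positivity) (by positivity)
      _ ≤ m := h1'
  have hPinv : P * P⁻¹ = 1 := mul_inv_cancel₀ hPpos.ne'
  have step2 : ‖G z‖ * (24/49) ≤ m * P := by
    have := mul_le_mul_of_nonneg_right step1 hPpos.le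
    calc ‖G z‖ * (24/49) = ‖G z‖ * (24/49) * (P⁻¹ * P) := by
          rw [inv_mul_cancel₀ hPpos.ne', mul_one]
      _ = ‖G z‖ * (24/49) * P⁻¹ * P := by ring
      _ ≤ m * P := this
  calc ‖G z‖ = (49/24) * (‖G z‖ * (24/49)) := by ring
    _ ≤ (49/24) * (m * P) := by linarith
    _ = 49 / 24 * m * P := by ring


lemma differentiableAt_conj_reflect {G : ℂ → ℂ} {z : ℂ}
    (h : DifferentiableAt ℂ G ((starRingEnd ℂ) z)) :
    DifferentiableAt ℂ (fun w => (starRingEnd ℂ) (G ((starRingEnd ℂ) w))) z := by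
  have hg : HasDerivAt G (deriv G ((starRingEnd ℂ) z)) ((starRingEnd ℂ) z) := h.hasDerivAt
  set g := deriv G ((starRingEnd ℂ) z)
  have h2 := hasDerivAt_iff_isLittleO.1 hg
  have h3 := h2.comp_tendsto (Complex.continuous_conj.tendsto z)
  have key : HasDerivAt (fun w => (starRingEnd ℂ) (G ((starRingEnd ℂ) w)))
      ((starRingEnd ℂ) g) z := by
    rw [hasDerivAt_iff_isLittleO]
    rw [Asymptotics.isLittleO_iff] at h3 ⊢
    intro c hc
    filter_upwards [h3 hc] with w hw
    have hv : (starRingEnd ℂ) (G ((starRingEnd ℂ) w)) - (starRingEnd ℂ) (G ((starRingEnd ℂ) z))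
        - (w - z) • (starRingEnd ℂ) g
        = (starRingEnd ℂ) (G ((starRingEnd ℂ) w) - G ((starRingEnd ℂ) z)
            - ((starRingEnd ℂ) w - (starRingEnd ℂ) z) • g) := by
      simp only [map_sub, smul_eq_mul, map_mul, Complex.conj_conj]
    rw [hv, RCLike.norm_conj]
    have hn : ‖w - z‖ = ‖(starRingEnd ℂ) w - (starRingEnd ℂ) z‖ := by
      rw [← map_sub, RCLike.norm_conj]
    rw [hn]
    simpa using hw
  exact key.differentiableAt


lemma two_constants (R m M : ℝ) (hR : 0 < R) (hm : 0 < m) (hmM : m ≤ M)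
    (G : ℂ → ℂ)
    (hd : ∀ z ∈ Metric.ball (0:ℂ) R, DifferentiableAt ℂ G z)
    (hcont : ContinuousOn G (Metric.closedBall (0:ℂ) R))
    (hb : ∀ z ∈ Metric.closedBall (0:ℂ) R, ‖G z‖ ≤ M)
    (hs : ∀ t : ℝ, |t| ≤ R → ‖G (t:ℂ)‖ ≤ m) :
    ∀ z : ℂ, ‖z‖ ≤ R / 7 → ‖G z‖ ≤ 49 / 24 * m * (M / m) ^ ((1:ℝ)/4) := by
  intro z hz
  have hM : 0 < M := lt_of_lt_of_le hm hmM
  have hP1 : (1:ℝ) ≤ (M/m) ^ ((1:ℝ)/4) := by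
    have h1 : (1:ℝ) ≤ M/m := (one_le_div hm).2 hmM
    calc (1:ℝ) = 1 ^ ((1:ℝ)/4) := (Real.one_rpow _).symm
      _ ≤ (M/m) ^ ((1:ℝ)/4) := Real.rpow_le_rpow (by norm_num) h1 (by norm_num)
  rcases lt_trichotomy z.im 0 with him | him | him
  · -- lower half plane: use the reflected function
    set G' : ℂ → ℂ := fun w => (starRingEnd ℂ) (G ((starRingEnd ℂ) w)) with hG'
    have hnorm : ∀ w : ℂ, ‖G' w‖ = ‖G ((starRingEnd ℂ) w)‖ := fun w => RCLike.norm_conj _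
    have hconjn : ∀ w : ℂ, ‖(starRingEnd ℂ) w‖ = ‖w‖ := fun w => RCLike.norm_conj _
    have hd' : ∀ w ∈ Metric.ball (0:ℂ) R, DifferentiableAt ℂ G' w := by
      intro w hw
      apply differentiableAt_conj_reflect
      apply hd
      rw [mem_ball_zero_iff, hconjn]
      exact mem_ball_zero_iff.1 hw
    have hmaps : Set.MapsTo (fun w => (starRingEnd ℂ) w) (Metric.closedBall (0:ℂ) R)
        (Metric.closedBall (0:ℂ) R) := by
      intro w hw
      show (starRingEnd ℂ) w ∈ Metric.closedBall (0:ℂ) R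
      rw [mem_closedBall_zero_iff, hconjn]
      exact mem_closedBall_zero_iff.1 hw
    have hcont' : ContinuousOn G' (Metric.closedBall (0:ℂ) R) := by
      apply Complex.continuous_conj.comp_continuousOn
      exact hcont.comp Complex.continuous_conj.continuousOn hmaps
    have hb' : ∀ w ∈ Metric.closedBall (0:ℂ) R, ‖G' w‖ ≤ M := by
      intro w hw
      rw [hnorm]
      exact hb _ (hmaps hw)
    have hs' : ∀ t : ℝ, |t| ≤ R → ‖G' (t:ℂ)‖ ≤ m := by
      intro t ht
      rw [hnorm, Complex.conj_ofReal]
      exact hs t ht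
    have hzz : ‖(starRingEnd ℂ) z‖ ≤ R / 7 := by rw [hconjn]; exact hz
    have hzim : 0 < ((starRingEnd ℂ) z).im := by
      rw [Complex.conj_im]; linarith
    have := upper_half_bound R m M hR hm hmM G' hd' hcont' hb' hs'
      ((starRingEnd ℂ) z) hzz hzim
    rwa [hnorm, Complex.conj_conj] at this
  · -- real axis
    have hzeq : z = ((z.re:ℝ):ℂ) := Complex.ext rfl (by simpa using him)
    have hre : |z.re| ≤ R := by
      have h1 : |z.re| ≤ ‖z‖ := by
        exact Complex.abs_re_le_norm z
      linarith [hz, hR]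
    have h1 : ‖G z‖ ≤ m := by rw [hzeq]; exact hs z.re hre
    calc ‖G z‖ ≤ m := h1
      _ ≤ 49 / 24 * m * (M/m) ^ ((1:ℝ)/4) := by nlinarith [hm, hP1]
  · exact upper_half_bound R m M hR hm hmM G hd hcont hb hs z hz him

set_option maxHeartbeats 1000000 in
/-- Fix `A > 0`. There exist `n₀` and `A' > 0` (depending only
on `A`) such that for every `n ≥ n₀`: if `F` is analytic on the closed disc
`D = {t : |t| ≤ √(log n)}`, satisfies `|F(t)| ≤ 2√n` on `D`, and
`|F(t)e^{−t²/2} − 1| ≤ A n⁻¹ (log n)^{3/2}` for all real `t ∈ [−√(log n), √(log n)]`,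
then `|F(t)e^{−t²/2} − 1| ≤ A' n^{-1/2} (log n)^{3/2}` for all complex `t` with
`|t| ≤ (1/7)√(log n)`. -/
theorem statement4 (A : ℝ) (hA : 0 < A) :
    ∃ n₀ : ℕ, ∃ A' : ℝ, 0 < A' ∧ ∀ n : ℕ, n₀ ≤ n → ∀ F : ℂ → ℂ,
      (∀ t ∈ Metric.closedBall (0 : ℂ) (Real.sqrt (Real.log n)), AnalyticAt ℂ F t) →
      (∀ t ∈ Metric.closedBall (0 : ℂ) (Real.sqrt (Real.log n)), ‖F t‖ ≤ 2 * Real.sqrt n) →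
      (∀ t : ℝ, |t| ≤ Real.sqrt (Real.log n) →
        ‖F (t : ℂ) * Complex.exp (-(t : ℂ) ^ 2 / 2) - 1‖ ≤
          A * (n : ℝ)⁻¹ * Real.log n ^ ((3 : ℝ) / 2)) →
      ∀ t : ℂ, ‖t‖ ≤ 1 / 7 * Real.sqrt (Real.log n) →
        ‖F t * Complex.exp (-t ^ 2 / 2) - 1‖ ≤
          A' * (n : ℝ) ^ (-(1 : ℝ) / 2) * Real.log n ^ ((3 : ℝ) / 2) := by
  refine ⟨max 3 (Nat.ceil A), 49 * (A + 1), by positivity, ?_⟩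
  intro n hn F hFa hFb hFr
  have hn3 : (3:ℕ) ≤ n := le_trans (le_max_left _ _) hn
  have hnR : (3:ℝ) ≤ (n:ℝ) := by exact_mod_cast hn3
  have hnpos : (0:ℝ) < (n:ℝ) := by linarith
  have hAn : A ≤ (n:ℝ) := by
    have h1 : (Nat.ceil A : ℕ) ≤ n := le_trans (le_max_right _ _) hn
    have h2 : ((Nat.ceil A : ℕ) : ℝ) ≤ (n:ℝ) := by exact_mod_cast h1
    exact le_trans (Nat.le_ceil A) h2
  have hlog1 : 1 ≤ Real.log n := by
    rw [Real.le_log_iff_exp_le hnpos]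
    calc Real.exp 1 ≤ 2.7182818286 := Real.exp_one_lt_d9.le
      _ ≤ 3 := by norm_num
      _ ≤ (n:ℝ) := hnR
  have hlogpos : 0 < Real.log n := by linarith
  set R : ℝ := Real.sqrt (Real.log n) with hRdef
  have hRpos : 0 < R := Real.sqrt_pos.2 hlogpos
  have hR2 : R^2 = Real.log n := Real.sq_sqrt hlogpos.le
  set L32 : ℝ := Real.log n ^ ((3:ℝ)/2) with hLdef
  have hL32pos : 0 < L32 := Real.rpow_pos_of_pos hlogpos _
  have hL32one : 1 ≤ L32 := by
    calc (1:ℝ) = 1 ^ ((3:ℝ)/2) := (Real.one_rpow _).symm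
      _ ≤ L32 := Real.rpow_le_rpow (by norm_num) hlog1 (by norm_num)
  set m : ℝ := A * (n : ℝ)⁻¹ * L32 with hmdef
  set M : ℝ := 3 * (n:ℝ) with hMdef
  have hmpos : 0 < m := by positivity
  have hMpos : 0 < M := by positivity
  -- L32 ≤ (9/4) n
  have hL32n : L32 ≤ 9/4 * (n:ℝ) := by
    have h1 : Real.log n ≤ 3/2 * (n:ℝ) ^ ((2:ℝ)/3) := by
      have h2 := Real.log_le_rpow_div hnpos.le (show (0:ℝ) < 2/3 by norm_num)
      have h3 : (n:ℝ) ^ ((2:ℝ)/3) / (2/3) = 3/2 * (n:ℝ) ^ ((2:ℝ)/3) := by ring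
      linarith [h3 ▸ h2]
    have h4 : L32 ≤ (3/2 * (n:ℝ) ^ ((2:ℝ)/3)) ^ ((3:ℝ)/2) :=
      Real.rpow_le_rpow hlogpos.le h1 (by norm_num)
    have h5 : (3/2 * (n:ℝ) ^ ((2:ℝ)/3)) ^ ((3:ℝ)/2)
        = (3/2:ℝ) ^ ((3:ℝ)/2) * (n:ℝ) := by
      rw [Real.mul_rpow (by norm_num) (Real.rpow_nonneg hnpos.le _),
        ← Real.rpow_mul hnpos.le]
      norm_num
    have h6 : (3/2:ℝ) ^ ((3:ℝ)/2) ≤ 9/4 := by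
      have h7 : (3/2:ℝ) ^ ((3:ℝ)/2) = (3/2:ℝ) ^ (1:ℝ) * (3/2:ℝ) ^ ((1:ℝ)/2) := by
        rw [← Real.rpow_add (by norm_num)]; norm_num
      have h8 : (3/2:ℝ) ^ ((1:ℝ)/2) ≤ (3/2:ℝ) ^ (1:ℝ) :=
        Real.rpow_le_rpow_of_exponent_le (by norm_num) (by norm_num)
      rw [h7, Real.rpow_one] at *
      nlinarith [h8]
    calc L32 ≤ (3/2:ℝ) ^ ((3:ℝ)/2) * (n:ℝ) := h5 ▸ h4
      _ ≤ 9/4 * (n:ℝ) := by nlinarith [hnpos]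
  have hmM : m ≤ M := by
    have : m ≤ A * (n:ℝ)⁻¹ * (9/4 * (n:ℝ)) := by
      apply mul_le_mul_of_nonneg_left hL32n (by positivity)
    have h2 : A * (n:ℝ)⁻¹ * (9/4 * (n:ℝ)) = 9/4 * A := by
      field_simp
    rw [h2] at this
    calc m ≤ 9/4 * A := this
      _ ≤ 3 * (n:ℝ) := by nlinarith [hAn, hA]
  -- the function G
  set G : ℂ → ℂ := fun z => F z * Complex.exp (-z^2/2) - 1 with hGdef
  have hexp_diff : Differentiable ℂ (fun z : ℂ => Complex.exp (-z^2/2)) :=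
    (((differentiable_pow 2).neg).div_const 2).cexp
  have hd : ∀ z ∈ Metric.ball (0:ℂ) R, DifferentiableAt ℂ G z := by
    intro z hz
    have h1 : AnalyticAt ℂ F z := hFa z (ball_subset_closedBall hz)
    exact (h1.differentiableAt.mul (hexp_diff z)).sub (differentiableAt_const 1)
  have hcont : ContinuousOn G (Metric.closedBall (0:ℂ) R) := by
    have h1 : ContinuousOn F (Metric.closedBall (0:ℂ) R) :=
      fun z hz => ((hFa z hz).continuousAt).continuousWithinAt
    exact (h1.mul hexp_diff.continuous.continuousOn).sub continuousOn_const
  have hexp_bound : ∀ z : ℂ, ‖z‖ ≤ R → ‖Complex.exp (-z^2/2)‖ ≤ Real.sqrt n := by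
    intro z hz
    rw [Complex.norm_exp]
    have hre : (-z^2/2).re = (z.im^2 - z.re^2)/2 := by
      simp [Complex.div_re, Complex.normSq_apply, pow_two, Complex.mul_re]
      try ring
    have him2 : z.im^2 ≤ R^2 := by
      have h1 : |z.im| ≤ ‖z‖ := by
        exact Complex.abs_im_le_norm z
      nlinarith [abs_nonneg z.im, norm_nonneg z, sq_abs z.im]
    have h2 : (-z^2/2).re ≤ Real.log n / 2 := by
      rw [hre, ← hR2]
      nlinarith [sq_nonneg z.re]
    have h3 := Real.exp_le_exp.2 h2
    have h4 : Real.exp (Real.log n / 2) = Real.sqrt n := by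
      rw [Real.sqrt_eq_rpow, Real.rpow_def_of_pos hnpos]
      congr 1
      ring
    rw [← h4]
    exact h3
  have hb : ∀ z ∈ Metric.closedBall (0:ℂ) R, ‖G z‖ ≤ M := by
    intro z hz
    have hzn : ‖z‖ ≤ R := mem_closedBall_zero_iff.1 hz
    have h1 : ‖F z * Complex.exp (-z^2/2)‖ ≤ 2 * Real.sqrt n * Real.sqrt n := by
      rw [norm_mul]
      apply mul_le_mul (hFb z hz) (hexp_bound z hzn) (norm_nonneg _) (by positivity)
    have h2 : Real.sqrt n * Real.sqrt n = (n:ℝ) := Real.mul_self_sqrt hnpos.le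
    calc ‖G z‖ ≤ ‖F z * Complex.exp (-z^2/2)‖ + ‖(1:ℂ)‖ := norm_sub_le _ _
      _ ≤ 2 * Real.sqrt n * Real.sqrt n + 1 := by
          rw [norm_one]; linarith [h1]
      _ = 2 * (n:ℝ) + 1 := by rw [mul_assoc, h2]
      _ ≤ M := by rw [hMdef]; linarith
  have hs : ∀ t : ℝ, |t| ≤ R → ‖G (t:ℂ)‖ ≤ m := fun t ht => hFr t ht
  -- apply the two-constants theorem
  intro t ht
  have ht' : ‖t‖ ≤ R / 7 := by rw [hRdef]; linarith [ht]
  have hmain := two_constants R m M hRpos hmpos hmM G hd hcont hb hs t ht'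
  -- rpow arithmetic
  have e1 : m * (M/m) ^ ((1:ℝ)/4) = m ^ ((3:ℝ)/4) * M ^ ((1:ℝ)/4) := by
    have hmm : m ^ ((3:ℝ)/4) * m ^ ((1:ℝ)/4) = m := by
      rw [← Real.rpow_add hmpos]; norm_num
    have hq : m ^ ((1:ℝ)/4) ≠ 0 := ne_of_gt (Real.rpow_pos_of_pos hmpos _)
    calc m * (M/m) ^ ((1:ℝ)/4)
        = m * (M ^ ((1:ℝ)/4) / m ^ ((1:ℝ)/4)) := by
          rw [Real.div_rpow hMpos.le hmpos.le]
      _ = m ^ ((3:ℝ)/4) * m ^ ((1:ℝ)/4) * (M ^ ((1:ℝ)/4) / m ^ ((1:ℝ)/4)) := by rw [hmm]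
      _ = m ^ ((3:ℝ)/4) * M ^ ((1:ℝ)/4) * (m ^ ((1:ℝ)/4) / m ^ ((1:ℝ)/4)) := by ring
      _ = m ^ ((3:ℝ)/4) * M ^ ((1:ℝ)/4) := by rw [div_self hq, mul_one]
  have e2 : m ^ ((3:ℝ)/4) = A ^ ((3:ℝ)/4) * ((n:ℝ)⁻¹) ^ ((3:ℝ)/4) * L32 ^ ((3:ℝ)/4) := by
    rw [hmdef, Real.mul_rpow (by positivity) hL32pos.le,
      Real.mul_rpow hA.le (by positivity)]
  have e3 : M ^ ((1:ℝ)/4) = (3:ℝ) ^ ((1:ℝ)/4) * (n:ℝ) ^ ((1:ℝ)/4) := by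
    rw [hMdef, Real.mul_rpow (by norm_num) hnpos.le]
  have e4 : ((n:ℝ)⁻¹) ^ ((3:ℝ)/4) * (n:ℝ) ^ ((1:ℝ)/4) = (n:ℝ) ^ (-(1:ℝ)/2) := by
    rw [Real.inv_rpow hnpos.le, ← Real.rpow_neg hnpos.le, ← Real.rpow_add hnpos]
    norm_num
  have Heq : 49 / 24 * m * (M/m) ^ ((1:ℝ)/4)
      = (49/24 * (3:ℝ) ^ ((1:ℝ)/4)) * A ^ ((3:ℝ)/4) * (n:ℝ) ^ (-(1:ℝ)/2)
        * L32 ^ ((3:ℝ)/4) := by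
    calc 49 / 24 * m * (M/m) ^ ((1:ℝ)/4) = 49/24 * (m * (M/m) ^ ((1:ℝ)/4)) := by ring
      _ = 49/24 * (A ^ ((3:ℝ)/4) * ((n:ℝ)⁻¹) ^ ((3:ℝ)/4) * L32 ^ ((3:ℝ)/4)
            * ((3:ℝ) ^ ((1:ℝ)/4) * (n:ℝ) ^ ((1:ℝ)/4))) := by rw [e1, e2, e3]
      _ = (49/24 * (3:ℝ) ^ ((1:ℝ)/4)) * A ^ ((3:ℝ)/4)
            * (((n:ℝ)⁻¹) ^ ((3:ℝ)/4) * (n:ℝ) ^ ((1:ℝ)/4)) * L32 ^ ((3:ℝ)/4) := by ring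
      _ = (49/24 * (3:ℝ) ^ ((1:ℝ)/4)) * A ^ ((3:ℝ)/4) * (n:ℝ) ^ (-(1:ℝ)/2)
            * L32 ^ ((3:ℝ)/4) := by rw [e4]
  -- factor bounds
  have f1 : (49/24 : ℝ) * (3:ℝ) ^ ((1:ℝ)/4) ≤ 49 := by
    have h1 : (3:ℝ) ^ ((1:ℝ)/4) ≤ (3:ℝ) ^ (1:ℝ) :=
      Real.rpow_le_rpow_of_exponent_le (by norm_num) (by norm_num)
    rw [Real.rpow_one] at h1
    nlinarith
  have f2 : A ^ ((3:ℝ)/4) ≤ A + 1 := by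
    rcases le_total A 1 with hA1 | hA1
    · have := Real.rpow_le_one hA.le hA1 (by norm_num : (0:ℝ) ≤ (3:ℝ)/4)
      linarith
    · have h1 : A ^ ((3:ℝ)/4) ≤ A ^ (1:ℝ) :=
        Real.rpow_le_rpow_of_exponent_le hA1 (by norm_num)
      rw [Real.rpow_one] at h1
      linarith
  have f3 : L32 ^ ((3:ℝ)/4) ≤ L32 := by
    have h1 : L32 ^ ((3:ℝ)/4) ≤ L32 ^ (1:ℝ) :=
      Real.rpow_le_rpow_of_exponent_le hL32one (by norm_num)
    rwa [Real.rpow_one] at h1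
  have hnhalf : 0 < (n:ℝ) ^ (-(1:ℝ)/2) := Real.rpow_pos_of_pos hnpos _
  calc ‖F t * Complex.exp (-t ^ 2 / 2) - 1‖ = ‖G t‖ := rfl
    _ ≤ 49 / 24 * m * (M/m) ^ ((1:ℝ)/4) := hmain
    _ = (49/24 * (3:ℝ) ^ ((1:ℝ)/4)) * A ^ ((3:ℝ)/4) * (n:ℝ) ^ (-(1:ℝ)/2)
        * L32 ^ ((3:ℝ)/4) := Heq
    _ ≤ 49 * (A + 1) * (n:ℝ) ^ (-(1:ℝ)/2) * L32 := by
        have g1 : (49/24 * (3:ℝ) ^ ((1:ℝ)/4)) * A ^ ((3:ℝ)/4) ≤ 49 * (A + 1) := by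
          have hp1 : (0:ℝ) ≤ (3:ℝ) ^ ((1:ℝ)/4) := by positivity
          have hp2 : (0:ℝ) ≤ A ^ ((3:ℝ)/4) := by positivity
          nlinarith [f1, f2, hA]
        have hL34 : (0:ℝ) ≤ L32 ^ ((3:ℝ)/4) := by positivity
        calc (49/24 * (3:ℝ) ^ ((1:ℝ)/4)) * A ^ ((3:ℝ)/4) * (n:ℝ) ^ (-(1:ℝ)/2)
              * L32 ^ ((3:ℝ)/4)
            ≤ (49 * (A + 1)) * (n:ℝ) ^ (-(1:ℝ)/2) * L32 ^ ((3:ℝ)/4) := by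
              apply mul_le_mul_of_nonneg_right _ hL34
              exact mul_le_mul_of_nonneg_right g1 hnhalf.le
          _ ≤ (49 * (A + 1)) * (n:ℝ) ^ (-(1:ℝ)/2) * L32 := by
              apply mul_le_mul_of_nonneg_left f3 (by positivity)
    _ = 49 * (A + 1) * (n:ℝ) ^ (-(1:ℝ)/2) * Real.log n ^ ((3:ℝ)/2) := by rw [hLdef]
end
end

section
/- Let [a₁,b₁] and [a₂,b₂] be two disjoint closed bounded intervals. Then there exist constants C > 0 and d > 0 such that for every integer k ≥ 1 and every λ ∈ [a₂,b₂]: | ∫_{a₁}^{b₁} log|λ−μ| · p_k(μ) / w(μ) dμ | ≤ C e^{−dk}, where p_k and w are the k-th Chebyshev function and the Chebyshev weight on [a₁,b₁]. -/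
open Real

noncomputable section

/-- The `k`-th Chebyshev function on `[a,b]`:
`p_k(μ) = cos(k · arccos((2μ − a − b)/(b − a)))`. -/
def cheb (a b : ℝ) (k : ℕ) (mu : ℝ) : ℝ :=
  Real.cos (k * Real.arccos ((2 * mu - a - b) / (b - a)))

/-- The Chebyshev weight on `[a,b]`: `w(μ) = √((μ−a)(b−μ))`. -/
def chebW (a b mu : ℝ) : ℝ := Real.sqrt ((mu - a) * (b - mu))


lemma icos (m : ℤ) (hm : m ≠ 0) : ∫ θ in (0:ℝ)..π, Real.cos (m * θ) = 0 := by
  have hc : (m:ℝ) ≠ 0 := Int.cast_ne_zero.mpr hm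
  rw [intervalIntegral.integral_comp_mul_left Real.cos hc]
  simp [Real.sin_int_mul_pi]

lemma icoscos (n k : ℕ) (h : n ≠ k) :
    ∫ θ in (0:ℝ)..π, Real.cos (n * θ) * Real.cos (k * θ) = 0 := by
  have key : ∀ θ : ℝ, Real.cos (n*θ) * Real.cos (k*θ)
      = (Real.cos ((((n:ℤ)-(k:ℤ) : ℤ):ℝ) * θ) + Real.cos ((((n:ℤ)+(k:ℤ) : ℤ):ℝ) * θ)) / 2 := by
    intro θ
    push_cast
    rw [sub_mul, add_mul, Real.cos_add, Real.cos_sub]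
    ring
  simp_rw [key]
  rw [intervalIntegral.integral_div, intervalIntegral.integral_add]
  · rw [icos _ (by omega), icos _ (by omega)]; norm_num
  · exact (Real.continuous_cos.comp (by continuity)).intervalIntegrable _ _
  · exact (Real.continuous_cos.comp (by continuity)).intervalIntegrable _ _

lemma hasSum_logQ (t θ : ℝ) (ht : |t| < 1) :
    HasSum (fun n : ℕ => t^n * Real.cos (n*θ)/n)
      (-(1/2) * Real.log (1 - 2*t*Real.cos θ + t^2)) := by
  set z : ℂ := t * Complex.exp (θ * Complex.I) with hz
  have hnz : ‖z‖ < 1 := by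
    rw [hz]
    simp only [Complex.norm_mul, Complex.norm_exp_ofReal_mul_I, Complex.norm_real, Real.norm_eq_abs, mul_one]
    simpa using ht
  have H := Complex.hasSum_taylorSeries_neg_log hnz
  have H2 := ((Complex.hasSum_iff _ _).mp H).1
  have hre : ∀ n : ℕ, (z^n / n).re = t^n * Real.cos (n*θ)/n := by
    intro n
    have e1 : z^n / n = ((t^n/n : ℝ) : ℂ) * Complex.exp ((n*θ : ℝ) * Complex.I) := by
      rw [hz, mul_pow, ← Complex.exp_nat_mul]
      push_cast
      by_cases hn : (n:ℂ) = 0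
      · norm_cast at hn
        simp [hn]
      · field_simp
    rw [e1, Complex.re_ofReal_mul, Complex.exp_ofReal_mul_I_re]
    ring
  have hval : (-Complex.log (1 - z)).re = -(1/2) * Real.log (1 - 2*t*Real.cos θ + t^2) := by
    have hsq : Complex.normSq (1 - z) = 1 - 2*t*Real.cos θ + t^2 := by
      have hzre : z.re = t * Real.cos θ := by
        rw [hz]; simp [Complex.re_ofReal_mul, Complex.exp_ofReal_mul_I_re]
      have hzim : z.im = t * Real.sin θ := by
        rw [hz]
        simp [Complex.mul_im, Complex.exp_ofReal_mul_I_re, Complex.exp_ofReal_mul_I_im]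
      rw [Complex.normSq_apply]
      simp [Complex.sub_re, Complex.sub_im, hzre, hzim]
      have := Real.sin_sq_add_cos_sq θ
      nlinarith [Real.sin_sq_add_cos_sq θ]
    rw [Complex.neg_re, Complex.log_re, Complex.norm_def, Real.log_sqrt (Complex.normSq_nonneg _), hsq]
    ring
  rw [← hval]
  exact H2.congr_fun (fun n => (hre n).symm)

lemma tail_bound (t θ : ℝ) (ht : |t| < 1) (k : ℕ) :
    |Real.log (1 - 2*t*Real.cos θ + t^2) +
      2 * ∑ n ∈ Finset.range k, t^n * Real.cos (n*θ)/n| ≤ 2 * |t|^k / (1-|t|) := by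
  have h1 : (0:ℝ) < 1 - |t| := by linarith
  have hS := hasSum_logQ t θ ht
  set f : ℕ → ℝ := fun n => t^n * Real.cos (n*θ)/n with hf
  set S := -(1/2) * Real.log (1 - 2*t*Real.cos θ + t^2) with hSdef
  have hg : HasSum (fun n => f (n + k)) (S - ∑ i ∈ Finset.range k, f i) :=
    ((hasSum_nat_add_iff' k).mpr hS)
  have hb : ∀ n : ℕ, |f (n + k)| ≤ |t|^k * |t|^n := by
    intro n
    rw [hf]
    simp only
    rw [abs_div, abs_mul, abs_pow]
    rcases Nat.eq_zero_or_pos (n + k) with h | h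
    · have : n = 0 := by omega
      have : k = 0 := by omega
      simp_all
    · have h2 : (1:ℝ) ≤ ((n + k : ℕ):ℝ) := by exact_mod_cast h
      have h3 : |((n + k : ℕ):ℝ)| = ((n + k : ℕ):ℝ) := abs_of_nonneg (by positivity)
      have hc := Real.abs_cos_le_one (((n + k : ℕ):ℝ)*θ)
      have hcn := abs_nonneg (Real.cos (((n + k : ℕ):ℝ)*θ))
      have hp : (0:ℝ) ≤ |t|^(n+k) := by positivity
      have hpe : |t|^(n+k) = |t|^k * |t|^n := by rw [pow_add]; ring
      rw [h3, div_le_iff₀ (lt_of_lt_of_le zero_lt_one h2), ← hpe]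
      nlinarith
  have hgeo : HasSum (fun n : ℕ => |t|^k * |t|^n) (|t|^k * (1 - |t|)⁻¹) :=
    (hasSum_geometric_of_lt_one (abs_nonneg t) ht).mul_left _
  have hsumnorm : Summable (fun n => |f (n + k)|) :=
    Summable.of_nonneg_of_le (fun n => abs_nonneg _) hb hgeo.summable
  have hT : |S - ∑ i ∈ Finset.range k, f i| ≤ |t|^k * (1 - |t|)⁻¹ := by
    rw [← hg.tsum_eq]
    calc |∑' n, f (n + k)| ≤ ∑' n, |f (n + k)| := by
          have hsum' : Summable fun n => ‖f (n+k)‖ := by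
            simpa only [Real.norm_eq_abs] using hsumnorm
          have h4 := norm_tsum_le_tsum_norm hsum'
          simpa only [Real.norm_eq_abs] using h4
      _ ≤ ∑' n : ℕ, |t|^k * |t|^n := Summable.tsum_le_tsum hb hsumnorm hgeo.summable
      _ = |t|^k * (1 - |t|)⁻¹ := hgeo.tsum_eq
  have : Real.log (1 - 2*t*Real.cos θ + t^2) + 2 * ∑ n ∈ Finset.range k, f n
      = -2 * (S - ∑ i ∈ Finset.range k, f i) := by rw [hSdef]; ring
  rw [this, abs_mul]
  have h2 : |(-2:ℝ)| = 2 := by norm_num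
  rw [h2]
  rw [div_eq_mul_inv, mul_assoc]
  nlinarith [hT]

def Pk (t : ℝ) (k : ℕ) (θ : ℝ) : ℝ :=
  2 * ∑ n ∈ Finset.range k, t^n * Real.cos (n*θ)/n

lemma key_bound (t A : ℝ) (ht : |t| < 1) (k : ℕ) (hk : 1 ≤ k) :
    |∫ θ in (0:ℝ)..π, (A + Real.log (1 - 2*t*Real.cos θ + t^2)) * Real.cos (k*θ)|
      ≤ π * (2 * |t|^k / (1-|t|)) := by
  have h1 : (0:ℝ) < 1 - |t| := by linarith
  have hQpos : ∀ θ : ℝ, 0 < 1 - 2*t*Real.cos θ + t^2 := by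
    intro θ
    have h2 : t * Real.cos θ ≤ |t| := by
      calc t * Real.cos θ ≤ |t * Real.cos θ| := le_abs_self _
        _ = |t| * |Real.cos θ| := abs_mul _ _
        _ ≤ |t| * 1 := mul_le_mul_of_nonneg_left (Real.abs_cos_le_one θ) (abs_nonneg t)
        _ = |t| := mul_one _
    nlinarith [sq_abs t]
  have hQcont : Continuous fun θ : ℝ => Real.log (1 - 2*t*Real.cos θ + t^2) :=
    Continuous.log (by continuity) (fun θ => ne_of_gt (hQpos θ))
  set P : ℝ → ℝ := Pk t k with hP
  have hPdef : ∀ θ, P θ = 2 * ∑ n ∈ Finset.range k, t^n * Real.cos (n*θ)/n := fun θ => rfl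
  clear_value P
  have hPcont : Continuous P := by
    have : Continuous fun θ : ℝ => 2 * ∑ n ∈ Finset.range k, t^n * Real.cos (n*θ)/n := by
      apply Continuous.mul continuous_const
      apply continuous_finset_sum
      intro n _
      exact Continuous.div_const (Continuous.mul continuous_const
        (Real.continuous_cos.comp (continuous_const.mul continuous_id))) _
    exact this.congr fun θ => (hPdef θ).symm
  have hcont1 : Continuous fun θ : ℝ =>
      (Real.log (1 - 2*t*Real.cos θ + t^2) + P θ) * Real.cos (k*θ) := by
    apply Continuous.mul (hQcont.add hPcont) (by continuity)
  have hcont2 : Continuous fun θ : ℝ => (A - P θ) * Real.cos (k*θ) := by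
    apply Continuous.mul (continuous_const.sub hPcont) (by continuity)
  have hsplit : (∫ θ in (0:ℝ)..π, (A + Real.log (1 - 2*t*Real.cos θ + t^2)) * Real.cos (k*θ))
      = (∫ θ in (0:ℝ)..π, (Real.log (1 - 2*t*Real.cos θ + t^2) + P θ) * Real.cos (k*θ))
        + ∫ θ in (0:ℝ)..π, (A - P θ) * Real.cos (k*θ) := by
    rw [← intervalIntegral.integral_add (hcont1.intervalIntegrable _ _)
      (hcont2.intervalIntegrable _ _)]
    congr 1
    funext θ
    ring
  have hzero : (∫ θ in (0:ℝ)..π, (A - P θ) * Real.cos (k*θ)) = 0 := by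
    have e : ∀ θ : ℝ, (A - P θ) * Real.cos (k*θ)
        = A * Real.cos (k*θ)
          - ∑ n ∈ Finset.range k, (2*t^n/n) * (Real.cos (n*θ) * Real.cos (k*θ)) := by
      intro θ
      simp only [hPdef, sub_mul, Finset.mul_sum, Finset.sum_mul]
      congr 1
      apply Finset.sum_congr rfl
      intro n _
      ring
    have ck : Continuous fun θ : ℝ => Real.cos ((k:ℝ)*θ) :=
      Real.continuous_cos.comp (continuous_const.mul continuous_id)
    have cn : ∀ n : ℕ, Continuous fun θ : ℝ => Real.cos ((n:ℝ)*θ) := fun n =>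
      Real.continuous_cos.comp (continuous_const.mul continuous_id)
    have hint1 : IntervalIntegrable (fun θ : ℝ => A * Real.cos ((k:ℝ)*θ)) MeasureTheory.volume 0 π :=
      (continuous_const.mul ck).intervalIntegrable _ _
    have hintn : ∀ n : ℕ, IntervalIntegrable
        (fun θ : ℝ => (2*t^n/n) * (Real.cos ((n:ℝ)*θ) * Real.cos ((k:ℝ)*θ)))
        MeasureTheory.volume 0 π := fun n =>
      (continuous_const.mul ((cn n).mul ck)).intervalIntegrable _ _
    have hint2 : IntervalIntegrable
        (fun θ : ℝ => ∑ n ∈ Finset.range k, (2*t^n/n) * (Real.cos ((n:ℝ)*θ) * Real.cos ((k:ℝ)*θ)))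
        MeasureTheory.volume 0 π :=
      (continuous_finset_sum _ fun n _ =>
        continuous_const.mul ((cn n).mul ck)).intervalIntegrable _ _
    have hck : (∫ θ in (0:ℝ)..π, Real.cos ((k:ℝ)*θ)) = 0 := by
      have hk' : (k:ℤ) ≠ 0 := by exact_mod_cast Nat.one_le_iff_ne_zero.mp hk
      have := icos (k : ℤ) hk'
      simpa using this
    simp_rw [e]
    rw [intervalIntegral.integral_sub hint1 hint2, intervalIntegral.integral_const_mul, hck,
      intervalIntegral.integral_finset_sum (fun n _ => hintn n)]
    have hterm : ∀ n ∈ Finset.range k,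
        (∫ θ in (0:ℝ)..π, (2*t^n/n) * (Real.cos ((n:ℝ)*θ) * Real.cos ((k:ℝ)*θ))) = 0 := by
      intro n hn
      rw [intervalIntegral.integral_const_mul, icoscos n k (by simp at hn; omega), mul_zero]
    rw [Finset.sum_congr rfl hterm]
    simp
  rw [hsplit, hzero, add_zero]
  have hbd : ∀ θ ∈ Set.uIoc (0:ℝ) π,
      ‖(Real.log (1 - 2*t*Real.cos θ + t^2) + P θ) * Real.cos ((k:ℝ)*θ)‖
        ≤ 2 * |t|^k / (1-|t|) := by
    intro θ _
    rw [Real.norm_eq_abs, abs_mul]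
    simp only [hPdef]
    have h5 := tail_bound t θ ht k
    have h6 := Real.abs_cos_le_one ((k:ℝ)*θ)
    have h7 := abs_nonneg (Real.log (1 - 2*t*Real.cos θ + t^2)
      + 2 * ∑ n ∈ Finset.range k, t^n * Real.cos (n*θ)/n)
    have h8 := abs_nonneg (Real.cos ((k:ℝ)*θ))
    have h9 := mul_le_mul h5 h6 h8 (le_trans h7 h5)
    simpa using h9
  have H := intervalIntegral.norm_integral_le_of_norm_le_const hbd
  rw [Real.norm_eq_abs] at H
  calc |∫ θ in (0:ℝ)..π, (Real.log (1 - 2*t*Real.cos θ + t^2) + P θ) * Real.cos ((k:ℝ)*θ)|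
      ≤ 2 * |t|^k / (1-|t|) * |π - 0| := H
    _ = π * (2 * |t|^k / (1-|t|)) := by
        rw [sub_zero, abs_of_nonneg Real.pi_nonneg]; ring

lemma cov (a₁ b₁ : ℝ) (h₁ : a₁ < b₁) (k : ℕ) (lam : ℝ) :
    (∫ μ in a₁..b₁, Real.log |lam - μ| * cheb a₁ b₁ k μ / chebW a₁ b₁ μ)
      = ∫ θ in (0:ℝ)..π,
          Real.log |lam - ((a₁+b₁)/2 + (b₁-a₁)/2 * Real.cos θ)| * Real.cos (k*θ) := by
  set c := (a₁+b₁)/2 with hc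
  set r := (b₁-a₁)/2 with hr
  have hrpos : 0 < r := by rw [hr]; linarith
  set f : ℝ → ℝ := fun θ => c + r * Real.cos θ with hf
  set g : ℝ → ℝ := fun μ => Real.log |lam - μ| * cheb a₁ b₁ k μ / chebW a₁ b₁ μ with hg
  have hs : MeasurableSet (Set.Ioo (0:ℝ) π) := measurableSet_Ioo
  have hderiv : ∀ θ ∈ Set.Ioo (0:ℝ) π,
      HasDerivWithinAt f (-(r * Real.sin θ)) (Set.Ioo (0:ℝ) π) θ := by
    intro θ _
    have : HasDerivAt f (r * (-Real.sin θ)) θ :=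
      ((Real.hasDerivAt_cos θ).const_mul r).const_add c
    simpa [mul_comm, neg_mul, mul_neg] using this.hasDerivWithinAt
  have hinj : Set.InjOn f (Set.Ioo (0:ℝ) π) := by
    intro x hx y hy hxy
    have := Real.injOn_cos (Set.Ioo_subset_Icc_self hx) (Set.Ioo_subset_Icc_self hy)
    apply this
    have : r * Real.cos x = r * Real.cos y := by
      have := hxy
      simp only [hf] at this
      linarith
    exact mul_left_cancel₀ (ne_of_gt hrpos) this
  have himg : f '' Set.Ioo (0:ℝ) π = Set.Ioo a₁ b₁ := by
    ext μ
    constructor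
    · rintro ⟨θ, hθ, rfl⟩
      have h2 : Real.cos θ < 1 := by
        have := Real.cos_lt_cos_of_nonneg_of_le_pi (le_refl 0) hθ.2.le hθ.1
        simpa using this
      have h3 : -1 < Real.cos θ := by
        have := Real.cos_lt_cos_of_nonneg_of_le_pi hθ.1.le (le_refl π) hθ.2
        simpa using this
      constructor
      · simp only [hf, hc, hr]; nlinarith
      · simp only [hf, hc, hr]; nlinarith
    · intro hμ
      set x := (μ - c)/r with hx
      have hx1 : -1 < x := by
        rw [hx, hc, hr] at *
        rw [lt_div_iff₀ hrpos]
        simp only [hr] at *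
        cases hμ
        linarith
      have hx2 : x < 1 := by
        rw [hx, div_lt_iff₀ hrpos]
        simp only [hc, hr] at *
        cases hμ
        linarith
      refine ⟨Real.arccos x, ⟨Real.arccos_pos.mpr hx2, ?_⟩, ?_⟩
      · refine lt_of_le_of_ne (Real.arccos_le_pi x) fun h => ?_
        rw [Real.arccos_eq_pi] at h
        linarith
      · simp only [hf]
        rw [Real.cos_arccos hx1.le hx2.le, hx]
        field_simp; ring
  have e1 : (∫ μ in a₁..b₁, g μ) = ∫ μ in Set.Ioo a₁ b₁, g μ := by
    rw [intervalIntegral.integral_of_le h₁.le, MeasureTheory.integral_Ioc_eq_integral_Ioo]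
  have e2 : (∫ μ in Set.Ioo a₁ b₁, g μ)
      = ∫ θ in Set.Ioo (0:ℝ) π, |(-(r * Real.sin θ))| • g (f θ) := by
    rw [← himg]
    exact MeasureTheory.integral_image_eq_integral_abs_deriv_smul hs hderiv hinj g
  have e3 : ∀ θ ∈ Set.Ioo (0:ℝ) π,
      |(-(r * Real.sin θ))| • g (f θ)
        = Real.log |lam - (c + r * Real.cos θ)| * Real.cos (k*θ) := by
    intro θ hθ
    have hsin : 0 < Real.sin θ := Real.sin_pos_of_pos_of_lt_pi hθ.1 hθ.2
    have habs : |(-(r * Real.sin θ))| = r * Real.sin θ := by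
      rw [abs_neg, abs_of_pos (by positivity)]
    have hargs : (2 * f θ - a₁ - b₁) / (b₁ - a₁) = Real.cos θ := by
      have hba : b₁ - a₁ ≠ 0 := by linarith
      simp only [hf, hc, hr]
      rw [div_eq_iff hba]
      ring
    have hchW : chebW a₁ b₁ (f θ) = r * Real.sin θ := by
      rw [chebW]
      have : (f θ - a₁) * (b₁ - f θ) = (r * Real.sin θ)^2 := by
        simp only [hf, hc, hr]
        linear_combination (-((b₁-a₁)/2)^2) * Real.sin_sq_add_cos_sq θ
      rw [this, Real.sqrt_sq (by positivity)]
    have hch : cheb a₁ b₁ k (f θ) = Real.cos (k * θ) := by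
      rw [cheb, hargs, Real.arccos_cos hθ.1.le hθ.2.le]
    rw [habs, hg]
    simp only
    rw [hch, hchW]
    have hne : r * Real.sin θ ≠ 0 := by positivity
    have : f θ = c + r * Real.cos θ := rfl
    rw [this]
    rw [smul_eq_mul]; field_simp
  have e4 : (∫ θ in Set.Ioo (0:ℝ) π, |(-(r * Real.sin θ))| • g (f θ))
      = ∫ θ in Set.Ioo (0:ℝ) π,
          Real.log |lam - (c + r * Real.cos θ)| * Real.cos (k*θ) :=
    MeasureTheory.setIntegral_congr_fun hs e3
  have e5 : (∫ θ in Set.Ioo (0:ℝ) π,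
        Real.log |lam - (c + r * Real.cos θ)| * Real.cos (k*θ))
      = ∫ θ in (0:ℝ)..π, Real.log |lam - (c + r * Real.cos θ)| * Real.cos (k*θ) := by
    rw [intervalIntegral.integral_of_le Real.pi_nonneg,
      MeasureTheory.integral_Ioc_eq_integral_Ioo]
  rw [e1, e2, e4, e5]

lemma t0_mem (s₀ : ℝ) (hs₀ : 1 < s₀) :
    0 < s₀ - Real.sqrt (s₀^2 - 1) ∧ s₀ - Real.sqrt (s₀^2 - 1) < 1 := by
  have h0 : (0:ℝ) ≤ s₀^2 - 1 := by nlinarith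
  have hsq := Real.sq_sqrt h0
  have hnn := Real.sqrt_nonneg (s₀^2 - 1)
  have hlt : Real.sqrt (s₀^2 - 1) < s₀ := by
    have : Real.sqrt (s₀^2 - 1) < Real.sqrt (s₀^2) := by
      apply Real.sqrt_lt_sqrt h0
      linarith
    rwa [Real.sqrt_sq (by linarith)] at this
  constructor
  · linarith
  · nlinarith

lemma exists_t (s s₀ : ℝ) (hs₀ : 1 < s₀) (h : s₀ ≤ |s|) :
    ∃ t : ℝ, t ≠ 0 ∧ |t| ≤ s₀ - Real.sqrt (s₀^2 - 1) ∧ t^2 + 1 = 2*t*s := by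
  set u := |s| with hu
  have hu1 : 1 < u := lt_of_lt_of_le hs₀ h
  have h0u : (0:ℝ) ≤ u^2 - 1 := by nlinarith
  have h0s : (0:ℝ) ≤ s₀^2 - 1 := by nlinarith
  have hsqu := Real.sq_sqrt h0u
  have hsqs := Real.sq_sqrt h0s
  have hnnu := Real.sqrt_nonneg (u^2 - 1)
  have hnns := Real.sqrt_nonneg (s₀^2 - 1)
  set τ := u - Real.sqrt (u^2 - 1) with hτ
  set t₀ := s₀ - Real.sqrt (s₀^2 - 1) with ht₀
  have hτpos : 0 < τ := by
    have : Real.sqrt (u^2 - 1) < Real.sqrt (u^2) := Real.sqrt_lt_sqrt h0u (by linarith)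
    rw [Real.sqrt_sq (by linarith)] at this
    simp only [hτ]; linarith
  have hτid : τ * (u + Real.sqrt (u^2 - 1)) = 1 := by
    simp only [hτ]; nlinarith
  have ht₀id : t₀ * (s₀ + Real.sqrt (s₀^2 - 1)) = 1 := by
    simp only [ht₀]; nlinarith
  have hmono : s₀ + Real.sqrt (s₀^2 - 1) ≤ u + Real.sqrt (u^2 - 1) := by
    have : Real.sqrt (s₀^2 - 1) ≤ Real.sqrt (u^2 - 1) :=
      Real.sqrt_le_sqrt (by nlinarith)
    linarith
  have ht₀pos : 0 < t₀ := (t0_mem s₀ hs₀).1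
  have hτle : τ ≤ t₀ := by
    have hpos1 : 0 < s₀ + Real.sqrt (s₀^2 - 1) := by linarith
    have hpos2 : 0 < u + Real.sqrt (u^2 - 1) := by linarith
    nlinarith
  have hid : τ^2 + 1 = 2*τ*u := by simp only [hτ]; nlinarith
  rcases le_or_gt 0 s with hspos | hsneg
  · have hus : u = s := abs_of_nonneg hspos
    exact ⟨τ, ne_of_gt hτpos, by rw [abs_of_pos hτpos]; exact hτle, by rw [← hus]; exact hid⟩
  · have hus : u = -s := abs_of_neg hsneg
    refine ⟨-τ, by simp [ne_of_gt hτpos], by rw [abs_neg, abs_of_pos hτpos]; exact hτle, ?_⟩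
    have : u = -s := hus
    nlinarith [hid]

lemma main_bound (a₁ b₁ : ℝ) (h₁ : a₁ < b₁) (s₀ : ℝ) (hs₀ : 1 < s₀) :
    ∃ C > (0:ℝ), ∃ d > (0:ℝ), ∀ k : ℕ, 1 ≤ k → ∀ lam : ℝ,
      s₀ ≤ |(lam - (a₁+b₁)/2) / ((b₁-a₁)/2)| →
      |∫ μ in a₁..b₁, Real.log |lam - μ| * cheb a₁ b₁ k μ / chebW a₁ b₁ μ|
        ≤ C * Real.exp (-d * (k:ℝ)) := by
  set t₀ := s₀ - Real.sqrt (s₀^2 - 1) with ht₀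
  obtain ⟨ht₀pos, ht₀lt⟩ := t0_mem s₀ hs₀
  refine ⟨π * (2 / (1 - t₀)), mul_pos Real.pi_pos (div_pos two_pos (by linarith)), -Real.log t₀, ?_, ?_⟩
  · simp only [neg_pos]
    exact Real.log_neg ht₀pos ht₀lt
  intro k hk lam hlam
  set c := (a₁+b₁)/2 with hc
  set r := (b₁-a₁)/2 with hr
  have hrpos : 0 < r := by rw [hr]; linarith
  set s := (lam - c)/r with hs
  obtain ⟨t, htne, htle, htid⟩ := exists_t s s₀ hs₀ hlam
  have htabs : |t| < 1 := lt_of_le_of_lt htle ht₀lt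
  have htabspos : 0 < |t| := abs_pos.mpr htne
  have hQpos : ∀ θ : ℝ, 0 < 1 - 2*t*Real.cos θ + t^2 := by
    intro θ
    have h2 : t * Real.cos θ ≤ |t| := by
      calc t * Real.cos θ ≤ |t * Real.cos θ| := le_abs_self _
        _ = |t| * |Real.cos θ| := abs_mul _ _
        _ ≤ |t| * 1 := mul_le_mul_of_nonneg_left (Real.abs_cos_le_one θ) (abs_nonneg t)
        _ = |t| := mul_one _
    nlinarith [sq_abs t]
  set A := Real.log (r / (2*|t|)) with hA
  have hlog : ∀ θ : ℝ, Real.log |lam - (c + r * Real.cos θ)|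
      = A + Real.log (1 - 2*t*Real.cos θ + t^2) := by
    intro θ
    have he : lam - (c + r * Real.cos θ)
        = r * ((1 - 2*t*Real.cos θ + t^2) / (2*t)) := by
      have hrs : r * s = lam - c := by rw [hs]; field_simp
      have hst : s = (t^2 + 1)/(2*t) := by
        rw [eq_div_iff (by simpa using htne)]
        linarith [htid]
      have : lam - (c + r * Real.cos θ) = r * (s - Real.cos θ) := by
        rw [mul_sub, hrs]; ring
      rw [this, hst]
      have h2t : (2:ℝ)*t ≠ 0 := by simpa using htne
      field_simp
      ring_nf
      try tauto
    rw [he]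
    have habs : |r * ((1 - 2*t*Real.cos θ + t^2) / (2*t))|
        = (r / (2*|t|)) * (1 - 2*t*Real.cos θ + t^2) := by
      rw [abs_mul, abs_of_pos hrpos, abs_div, abs_mul, abs_of_pos (hQpos θ), abs_two]
      ring
    rw [habs, Real.log_mul (by positivity) (ne_of_gt (hQpos θ)), hA]
  rw [cov a₁ b₁ h₁ k lam]
  have hre : (∫ θ in (0:ℝ)..π,
        Real.log |lam - ((a₁+b₁)/2 + (b₁-a₁)/2 * Real.cos θ)| * Real.cos (k*θ))
      = ∫ θ in (0:ℝ)..π,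
        (A + Real.log (1 - 2*t*Real.cos θ + t^2)) * Real.cos (k*θ) := by
    apply intervalIntegral.integral_congr
    intro θ _
    simp only
    rw [← hc, ← hr]
    exact congrArg (· * Real.cos (k*θ)) (hlog θ)
  rw [hre]
  calc |∫ θ in (0:ℝ)..π, (A + Real.log (1 - 2*t*Real.cos θ + t^2)) * Real.cos (k*θ)|
      ≤ π * (2 * |t|^k / (1-|t|)) := key_bound t A htabs k hk
    _ ≤ π * (2 * t₀^k / (1-t₀)) := by
        apply mul_le_mul_of_nonneg_left _ Real.pi_nonneg
        apply div_le_div₀ (by positivity)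
          (by nlinarith [pow_le_pow_left₀ (abs_nonneg t) htle k]) (by linarith) (by linarith)
    _ = π * (2 / (1 - t₀)) * Real.exp (-(-Real.log t₀) * k) := by
        have hexp : t₀^k = Real.exp ((k:ℝ) * Real.log t₀) := by
          rw [Real.exp_nat_mul, Real.exp_log ht₀pos]
        rw [hexp, neg_neg]
        rw [mul_comm (Real.log t₀) (k:ℝ)]
        ring

/-- For two disjoint closed bounded intervals `[a₁,b₁]`,
`[a₂,b₂]`, there are `C > 0` and `d > 0` such that for every `k ≥ 1` and every
`λ ∈ [a₂,b₂]`: `|∫_{a₁}^{b₁} log|λ−μ| p_k(μ)/w(μ) dμ| ≤ C e^{−dk}`, where `p_k`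
and `w` are taken on `[a₁,b₁]`. -/
theorem statement6 (a₁ b₁ a₂ b₂ : ℝ) (h₁ : a₁ < b₁) (h₂ : a₂ < b₂)
    (hdisj : Disjoint (Set.Icc a₁ b₁) (Set.Icc a₂ b₂)) :
    ∃ C > (0 : ℝ), ∃ d > (0 : ℝ), ∀ k : ℕ, 1 ≤ k → ∀ lam ∈ Set.Icc a₂ b₂,
      |∫ μ in a₁..b₁, Real.log |lam - μ| * cheb a₁ b₁ k μ / chebW a₁ b₁ μ| ≤
        C * Real.exp (-d * (k : ℝ)) := by
  have hgap : b₁ < a₂ ∨ b₂ < a₁ := by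
    by_contra h
    push_neg at h
    obtain ⟨h3, h4⟩ := h
    exact Set.disjoint_left.mp hdisj
      ⟨le_max_left _ _, max_le h₁.le h3⟩
      ⟨le_max_right _ _, max_le h4 h₂.le⟩
  have hr : 0 < (b₁-a₁)/2 := by linarith
  rcases hgap with hg | hg
  · set s₀ := 1 + (a₂-b₁)/((b₁-a₁)/2) with hs₀def
    have hs₀ : 1 < s₀ := by
      have := div_pos (by linarith : (0:ℝ) < a₂-b₁) hr
      simp only [hs₀def]; linarith
    obtain ⟨C, hC, d, hd, hbd⟩ := main_bound a₁ b₁ h₁ s₀ hs₀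
    refine ⟨C, hC, d, hd, fun k hk lam hlam => hbd k hk lam ?_⟩
    have h5 : s₀ ≤ (lam - (a₁+b₁)/2)/((b₁-a₁)/2) := by
      rw [le_div_iff₀ hr]
      have he : s₀ * ((b₁-a₁)/2) = (b₁-a₁)/2 + (a₂-b₁) := by
        have hba : b₁ - a₁ ≠ 0 := by linarith
        rw [hs₀def]; field_simp
      rw [he]
      have := hlam.1
      linarith
    exact le_trans h5 (le_abs_self _)
  · set s₀ := 1 + (a₁-b₂)/((b₁-a₁)/2) with hs₀def
    have hs₀ : 1 < s₀ := by
      have := div_pos (by linarith : (0:ℝ) < a₁-b₂) hr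
      simp only [hs₀def]; linarith
    obtain ⟨C, hC, d, hd, hbd⟩ := main_bound a₁ b₁ h₁ s₀ hs₀
    refine ⟨C, hC, d, hd, fun k hk lam hlam => hbd k hk lam ?_⟩
    have h5 : s₀ ≤ -((lam - (a₁+b₁)/2)/((b₁-a₁)/2)) := by
      rw [← neg_div, le_div_iff₀ hr]
      have he : s₀ * ((b₁-a₁)/2) = (b₁-a₁)/2 + (a₁-b₂) := by
        have hba : b₁ - a₁ ≠ 0 := by linarith
        rw [hs₀def]; field_simp
      rw [he]
      have := hlam.2
      linarith
    exact le_trans h5 (neg_le_abs _)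
end
end

section
/- For every integer k ≥ 1 and every real z > 1: ∫_0^π ( sin x · sin(kx) ) / ( z − cos x ) dx = π ( z − √(z² − 1) )^k. -/
open Real intervalIntegral MeasureTheory


lemma denom_pos {z : ℝ} (hz : 1 < z) (x : ℝ) : 0 < z - Real.cos x := by
  have := Real.cos_le_one x; linarith

lemma lemJ {z : ℝ} (hz : 1 < z) :
    ∫ x in (0:ℝ)..π, 1 / (z - Real.cos x) = π / Real.sqrt (z ^ 2 - 1) := by
  set s := Real.sqrt (z ^ 2 - 1) with hsdef
  have hz2 : (0:ℝ) < z ^ 2 - 1 := by nlinarith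
  have hs : 0 < s := Real.sqrt_pos.mpr hz2
  have hs2 : s ^ 2 = z ^ 2 - 1 := Real.sq_sqrt hz2.le
  set F : ℝ → ℝ := fun x => (1 / s) * Real.arccos ((z * Real.cos x - 1) / (z - Real.cos x)) with hF
  have hd := denom_pos hz
  have hcont : ContinuousOn F (Set.Icc 0 π) := by
    apply Continuous.continuousOn
    apply Continuous.mul continuous_const
    exact Real.continuous_arccos.comp
      ((continuous_const.mul Real.continuous_cos |>.sub continuous_const).div
        (continuous_const.sub Real.continuous_cos) (fun x => (hd x).ne'))
  have hderiv : ∀ x ∈ Set.Ioo (0:ℝ) π, HasDerivAt F (1 / (z - Real.cos x)) x := by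
    intro x hx
    have hsin : 0 < Real.sin x := Real.sin_pos_of_pos_of_lt_pi hx.1 hx.2
    have hdne : z - Real.cos x ≠ 0 := (hd x).ne'
    set u : ℝ := (z * Real.cos x - 1) / (z - Real.cos x) with hu
    have hcos1 : Real.cos x < 1 := by nlinarith [Real.sin_sq_add_cos_sq x, Real.cos_le_one x]
    have hcos2 : -1 < Real.cos x := by nlinarith [Real.sin_sq_add_cos_sq x, Real.neg_one_le_cos x]
    have hu1 : u ≠ 1 := by
      rw [hu]; intro h; rw [div_eq_iff hdne] at h; nlinarith
    have hum1 : u ≠ -1 := by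
      rw [hu]; intro h; rw [div_eq_iff hdne] at h; nlinarith
    have husq : 1 - u ^ 2 = (z ^ 2 - 1) * Real.sin x ^ 2 / (z - Real.cos x) ^ 2 := by
      rw [hu]
      have h1 := Real.sin_sq_add_cos_sq x
      field_simp
      ring_nf
      nlinarith [h1]
    have hsqrt : Real.sqrt (1 - u ^ 2) = s * Real.sin x / (z - Real.cos x) := by
      rw [husq, ← hs2, show s ^ 2 * Real.sin x ^ 2 / (z - Real.cos x) ^ 2
          = (s * Real.sin x / (z - Real.cos x)) ^ 2 by rw [div_pow, mul_pow]]
      exact Real.sqrt_sq (div_nonneg (mul_nonneg hs.le hsin.le) (hd x).le)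
    -- derivative of u
    have hderu : HasDerivAt (fun x => (z * Real.cos x - 1) / (z - Real.cos x))
        (-(Real.sin x) * (z ^ 2 - 1) / (z - Real.cos x) ^ 2) x := by
      have h1 : HasDerivAt (fun x => z * Real.cos x - 1) (z * (-Real.sin x)) x :=
        ((Real.hasDerivAt_cos x).const_mul z).sub_const 1
      have h2 : HasDerivAt (fun x => z - Real.cos x) (Real.sin x) x := by
        simpa using (Real.hasDerivAt_cos x).const_sub z
      have := h1.div h2 hdne
      refine this.congr_deriv ?_
      field_simp
      ring
    have harc : HasDerivAt (fun x => Real.arccos ((z * Real.cos x - 1) / (z - Real.cos x)))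
        (-(1 / Real.sqrt (1 - u ^ 2)) * (-(Real.sin x) * (z ^ 2 - 1) / (z - Real.cos x) ^ 2)) x :=
      (Real.hasDerivAt_arccos hum1 hu1).comp x (h := fun x => (z * Real.cos x - 1) / (z - Real.cos x)) hderu
    have := harc.const_mul (1 / s)
    refine this.congr_deriv ?_
    rw [hsqrt, show z ^ 2 - 1 = s ^ 2 from hs2.symm]
    field_simp
  have hint : IntervalIntegrable (fun x => 1 / (z - Real.cos x)) MeasureTheory.volume 0 π := by
    apply Continuous.intervalIntegrable
    exact continuous_const.div (continuous_const.sub Real.continuous_cos) (fun x => (hd x).ne')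
  have := intervalIntegral.integral_eq_sub_of_hasDerivAt_of_le Real.pi_pos.le hcont hderiv hint
  rw [this, hF]
  simp only [Real.cos_pi, Real.cos_zero]
  have e1 : (z * -1 - 1) / (z - -1) = -1 := by
    rw [div_eq_iff (by linarith)]; ring
  have e2 : (z * 1 - 1) / (z - 1) = 1 := by
    rw [div_eq_iff (by linarith)]; ring
  rw [e1, e2, Real.arccos_neg_one, Real.arccos_one]
  field_simp
  ring


lemma contI {z : ℝ} (hz : 1 < z) (c : ℝ) :
    IntervalIntegrable (fun x => Real.sin x * Real.sin (c * x) / (z - Real.cos x))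
      volume 0 π := by
  apply Continuous.intervalIntegrable
  exact (Real.continuous_sin.mul (Real.continuous_sin.comp (continuous_const.mul continuous_id))).div
    (continuous_const.sub Real.continuous_cos) (fun x => (denom_pos hz x).ne')

lemma contS (c : ℝ) :
    IntervalIntegrable (fun x => Real.sin x * Real.sin (c * x)) volume 0 π :=
  (Real.continuous_sin.mul (Real.continuous_sin.comp
    (continuous_const.mul continuous_id))).intervalIntegrable 0 π

lemma cos_int (n : ℕ) (hn : n ≠ 0) : ∫ x in (0:ℝ)..π, Real.cos ((n:ℝ) * x) = 0 := by
  have hn' : (n:ℝ) ≠ 0 := Nat.cast_ne_zero.mpr hn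
  have hderiv : ∀ x ∈ Set.uIcc (0:ℝ) π,
      HasDerivAt (fun y => Real.sin ((n:ℝ) * y) / n) (Real.cos ((n:ℝ) * x)) x := by
    intro x _
    have h1 : HasDerivAt (fun y : ℝ => (n:ℝ) * y) (n:ℝ) x := by
      simpa using (hasDerivAt_id x).const_mul (n:ℝ)
    have := ((Real.hasDerivAt_sin ((n:ℝ) * x)).comp x h1).div_const (n:ℝ)
    simpa [mul_comm, mul_div_assoc, hn'] using this
  rw [integral_eq_sub_of_hasDerivAt hderiv
    ((Real.continuous_cos.comp (continuous_const.mul continuous_id)).intervalIntegrable 0 π)]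
  simp [Real.sin_nat_mul_pi]

lemma orth (n : ℕ) (hn : 2 ≤ n) :
    ∫ x in (0:ℝ)..π, Real.sin x * Real.sin ((n:ℝ) * x) = 0 := by
  have key : ∀ x : ℝ, Real.sin x * Real.sin ((n:ℝ) * x)
      = (Real.cos ((↑(n-1):ℝ) * x) - Real.cos ((↑(n+1):ℝ) * x)) / 2 := by
    intro x
    have hc : ((n-1 : ℕ) : ℝ) = (n:ℝ) - 1 := by
      have : 1 ≤ n := by omega
      push_cast [this]; ring
    rw [hc, Real.cos_sub_cos]
    push_cast
    rw [show (((n:ℝ)-1)*x + ((n:ℝ)+1)*x)/2 = (n:ℝ)*x by ring,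
        show (((n:ℝ)-1)*x - ((n:ℝ)+1)*x)/2 = -x by ring, Real.sin_neg]
    ring
  simp_rw [key]
  rw [intervalIntegral.integral_div, intervalIntegral.integral_sub
    ((by fun_prop : Continuous fun x : ℝ => Real.cos ((↑(n-1):ℝ) * x)).intervalIntegrable 0 π)
    ((by fun_prop : Continuous fun x : ℝ => Real.cos ((↑(n+1):ℝ) * x)).intervalIntegrable 0 π),
    cos_int (n-1) (by omega), cos_int (n+1) (by omega)]
  norm_num

lemma rec_step {z : ℝ} (hz : 1 < z) (n : ℕ) (hn : 1 ≤ n) :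
    ∫ x in (0:ℝ)..π, Real.sin x * Real.sin (((n:ℝ)+1) * x) / (z - Real.cos x)
      = 2 * z * (∫ x in (0:ℝ)..π, Real.sin x * Real.sin ((n:ℝ) * x) / (z - Real.cos x))
        - (∫ x in (0:ℝ)..π, Real.sin x * Real.sin (((n:ℝ)-1) * x) / (z - Real.cos x))
        - 2 * (∫ x in (0:ℝ)..π, Real.sin x * Real.sin ((n:ℝ) * x)) := by
  have key : ∀ x : ℝ, Real.sin x * Real.sin (((n:ℝ)+1) * x) / (z - Real.cos x)
      = 2 * z * (Real.sin x * Real.sin ((n:ℝ) * x) / (z - Real.cos x))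
        - Real.sin x * Real.sin (((n:ℝ)-1) * x) / (z - Real.cos x)
        - 2 * (Real.sin x * Real.sin ((n:ℝ) * x)) := by
    intro x
    have hdne : z - Real.cos x ≠ 0 := (denom_pos hz x).ne'
    rw [show ((n:ℝ)+1)*x = (n:ℝ)*x + x by ring, show ((n:ℝ)-1)*x = (n:ℝ)*x - x by ring,
      Real.sin_add, Real.sin_sub]
    field_simp
    ring
  simp_rw [key]
  rw [intervalIntegral.integral_sub (((contI hz (n:ℝ)).const_mul (2*z)).sub (contI hz ((n:ℝ)-1)))
      ((contS (n:ℝ)).const_mul 2),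
    intervalIntegral.integral_sub ((contI hz (n:ℝ)).const_mul (2*z)) (contI hz ((n:ℝ)-1)),
    intervalIntegral.integral_const_mul, intervalIntegral.integral_const_mul]

lemma base1 {z : ℝ} (hz : 1 < z) :
    ∫ x in (0:ℝ)..π, Real.sin x * Real.sin x / (z - Real.cos x)
      = π * (z - Real.sqrt (z ^ 2 - 1)) := by
  have hz2 : (0:ℝ) < z ^ 2 - 1 := by nlinarith
  have hs : 0 < Real.sqrt (z ^ 2 - 1) := Real.sqrt_pos.mpr hz2
  have hs2 : Real.sqrt (z ^ 2 - 1) ^ 2 = z ^ 2 - 1 := Real.sq_sqrt hz2.le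
  have key : ∀ x : ℝ, Real.sin x * Real.sin x / (z - Real.cos x)
      = (z + Real.cos x) - (z ^ 2 - 1) * (1 / (z - Real.cos x)) := by
    intro x
    have hdne : z - Real.cos x ≠ 0 := (denom_pos hz x).ne'
    field_simp
    linear_combination Real.sin_sq_add_cos_sq x
  simp_rw [key]
  have hi1 : IntervalIntegrable (fun x => z + Real.cos x) volume 0 π :=
    (continuous_const.add Real.continuous_cos).intervalIntegrable 0 π
  have hi2 : IntervalIntegrable (fun x => (z ^ 2 - 1) * (1 / (z - Real.cos x))) volume 0 π := by
    apply Continuous.intervalIntegrable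
    exact continuous_const.mul (continuous_const.div
      (continuous_const.sub Real.continuous_cos) (fun x => (denom_pos hz x).ne'))
  rw [intervalIntegral.integral_sub hi1 hi2,
    intervalIntegral.integral_add (continuous_const.intervalIntegrable 0 π)
      (Real.continuous_cos.intervalIntegrable 0 π),
    intervalIntegral.integral_const_mul, lemJ hz, integral_cos, intervalIntegral.integral_const]
  simp only [Real.sin_pi, Real.sin_zero, smul_eq_mul, sub_zero, mul_one]
  rw [show (z^2-1) * (π / Real.sqrt (z^2-1))
      = Real.sqrt (z^2-1) * Real.sqrt (z^2-1) * (π / Real.sqrt (z^2-1)) by rw [← sq, hs2]]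
  field_simp
  linear_combination

lemma sin_sq_int : ∫ x in (0:ℝ)..π, Real.sin x * Real.sin x = π / 2 := by
  have key : ∀ x : ℝ, Real.sin x * Real.sin x = 1/2 - Real.cos (((2:ℕ):ℝ) * x) / 2 := by
    intro x
    have h1 := Real.sin_sq_add_cos_sq x
    have h2 := Real.cos_two_mul x
    push_cast
    nlinarith
  simp_rw [key]
  rw [intervalIntegral.integral_sub (continuous_const.intervalIntegrable 0 π)
      ((by fun_prop : Continuous fun x : ℝ => Real.cos ((↑(2:ℕ):ℝ) * x) / 2).intervalIntegrable 0 π),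
    intervalIntegral.integral_const]
  rw [intervalIntegral.integral_div, cos_int 2 (by omega)]
  simp
  ring

lemma pair {z : ℝ} (hz : 1 < z) (n : ℕ) :
    (∫ x in (0:ℝ)..π, Real.sin x * Real.sin (((n:ℝ)+1) * x) / (z - Real.cos x))
      = π * (z - Real.sqrt (z ^ 2 - 1)) ^ (n+1)
    ∧ (∫ x in (0:ℝ)..π, Real.sin x * Real.sin (((n:ℝ)+2) * x) / (z - Real.cos x))
      = π * (z - Real.sqrt (z ^ 2 - 1)) ^ (n+2) := by
  have hz2 : (0:ℝ) < z ^ 2 - 1 := by nlinarith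
  have hs2 : Real.sqrt (z ^ 2 - 1) ^ 2 = z ^ 2 - 1 := Real.sq_sqrt hz2.le
  set r := z - Real.sqrt (z ^ 2 - 1) with hrdef
  have hr : r ^ 2 = 2 * z * r - 1 := by rw [hrdef]; linear_combination hs2
  clear_value r
  induction n with
  | zero =>
    constructor
    · rw [show ((0:ℕ):ℝ) + 1 = 1 by norm_num]
      simp_rw [one_mul]
      rw [base1 hz, ← hrdef, pow_one]
    · have h2 := rec_step hz 1 le_rfl
      rw [show ((1:ℕ):ℝ) + 1 = ((0:ℕ):ℝ) + 2 by norm_num] at h2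
      rw [h2, show ((1:ℕ):ℝ) = 1 by norm_num]
      simp_rw [one_mul, show (1:ℝ) - 1 = 0 by norm_num, zero_mul, Real.sin_zero,
        mul_zero, zero_div, intervalIntegral.integral_zero]
      rw [base1 hz, sin_sq_int, ← hrdef]
      rw [pow_succ, pow_succ, pow_zero]
      linear_combination (-π) * hr
  | succ m ih =>
    obtain ⟨h1, h2⟩ := ih
    refine ⟨?_, ?_⟩
    · rw [show ((m+1:ℕ):ℝ) + 1 = ((m:ℕ):ℝ) + 2 by push_cast; ring]
      exact h2
    · have h3 := rec_step hz (m+2) (by omega)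
      rw [show ((m+2:ℕ):ℝ) + 1 = ((m+1:ℕ):ℝ) + 2 by push_cast; ring,
        show ((m+2:ℕ):ℝ) = ((m:ℕ):ℝ) + 2 by push_cast; ring] at h3
      rw [h3, show ((m:ℕ):ℝ) + 2 - 1 = ((m:ℕ):ℝ) + 1 by ring, h1, h2]
      rw [show ((m:ℕ):ℝ) + 2 = ((m+2:ℕ):ℝ) by push_cast; ring, orth (m+2) (by omega)]
      rw [show m + 1 + 2 = m + 3 by omega]
      linear_combination (-(π * r ^ (m+1))) * hr

/-- For every integer `k ≥ 1` and every real `z > 1`: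
`∫_0^π (sin x · sin(kx))/(z − cos x) dx = π (z − √(z² − 1))^k`. -/
theorem statement7 (k : ℕ) (hk : 1 ≤ k) (z : ℝ) (hz : 1 < z) :
    ∫ x in (0 : ℝ)..π, Real.sin x * Real.sin (k * x) / (z - Real.cos x) =
      π * (z - Real.sqrt (z ^ 2 - 1)) ^ k := by
  obtain ⟨m, rfl⟩ : ∃ m, k = m + 1 := ⟨k - 1, (Nat.succ_pred_eq_of_pos hk).symm⟩
  rw [show ((m+1:ℕ):ℝ) = ((m:ℕ):ℝ) + 1 by push_cast; ring]
  exact (pair hz m).1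
end

section
/- Fix d > 0 and let a_d be the associated kernel profile. Then for every continuous compactly supported f : ℝ → ℝ, one has ∫_ℝ ∫_ℝ [ log(1/|λ−μ|) − a_d(|λ−μ|) ] f(λ) f(μ) dλ dμ ≥ 0; that is, the kernel log|λ−μ|^{−1} − a_d(|λ−μ|), which vanishes for |λ−μ| ≥ d, is positive semidefinite. -/
open MeasureTheory Real

noncomputable section

/-- `a₀(t) = (3/4)t⁴ − (8/3)t³ + 3t²`. -/
def a0 (t : ℝ) : ℝ := 3 / 4 * t ^ 4 - 8 / 3 * t ^ 3 + 3 * t ^ 2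

/-- The kernel profile `a_d : [0,∞) → ℝ`:
`a_d(λ) = log(1/d) + a₀(λ/d) − a₀(1)` for `0 ≤ λ ≤ d`, and `a_d(λ) = log(1/λ)`
for `λ ≥ d`. -/
def aKer (d l : ℝ) : ℝ :=
  if l ≤ d then Real.log (1 / d) + a0 (l / d) - a0 1 else Real.log (1 / l)

def tri (s u : ℝ) : ℝ := max (s - |u|) 0

def pP (t : ℝ) : ℝ := 1 - 6*t^2 + 16*t^3 - 9*t^4

def cC (d s : ℝ) : ℝ := pP (s/d) / s^2

lemma pP_nonneg {t : ℝ} (h0 : 0 ≤ t) (h1 : t ≤ 1) : 0 ≤ pP t := by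
  unfold pP
  nlinarith [sq_nonneg (3*t - 1), sq_nonneg t, sq_nonneg (t - 1), mul_nonneg h0 (sub_nonneg.2 h1),
    sq_nonneg (t*(3*t-1)), mul_nonneg (mul_nonneg h0 h0) (sub_nonneg.2 h1)]

lemma pP_abs_le {t : ℝ} (h0 : 0 ≤ t) (h1 : t ≤ 1) : |pP t| ≤ 32 := by
  rw [abs_le]; unfold pP
  constructor <;> nlinarith [pow_le_one₀ h0 h1 (n := 2), pow_le_one₀ h0 h1 (n := 3),
    pow_le_one₀ h0 h1 (n := 4), pow_nonneg h0 2, pow_nonneg h0 3, pow_nonneg h0 4]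

lemma tri_nonneg (s u : ℝ) : 0 ≤ tri s u := le_max_right _ _

lemma tri_le_s {s : ℝ} (u : ℝ) (hs : 0 ≤ s) : tri s u ≤ s :=
  max_le (by nlinarith [abs_nonneg u]) hs

lemma tri_eq_zero {s u : ℝ} (h : s ≤ |u|) : tri s u = 0 :=
  max_eq_right (by linarith)

lemma tri_abs (s u : ℝ) : tri s |u| = tri s u := by rw [tri, tri, abs_abs]

lemma key2 (s x y : ℝ) :
    (∫ z : ℝ, (if x - s ≤ z ∧ z ≤ x then (1:ℝ) else 0) *
      (if y - s ≤ z ∧ z ≤ y then (1:ℝ) else 0)) = tri s (x - y) := by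
  have h1 : ∀ z : ℝ, (if x - s ≤ z ∧ z ≤ x then (1:ℝ) else 0) *
      (if y - s ≤ z ∧ z ≤ y then (1:ℝ) else 0)
      = (Set.Icc (max (x - s) (y - s)) (min x y)).indicator (fun _ => (1:ℝ)) z := by
    intro z
    rw [Set.indicator_apply]
    simp only [Set.mem_Icc, max_le_iff, le_min_iff]
    rcases em (x - s ≤ z ∧ z ≤ x) with hx1 | hx1 <;>
      rcases em (y - s ≤ z ∧ z ≤ y) with hy1 | hy1
    · simp only [if_pos hx1, if_pos hy1,
        if_pos (show (x - s ≤ z ∧ y - s ≤ z) ∧ z ≤ x ∧ z ≤ y from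
          ⟨⟨hx1.1, hy1.1⟩, hx1.2, hy1.2⟩), mul_one]
    · simp only [if_neg hy1,
        if_neg (show ¬((x - s ≤ z ∧ y - s ≤ z) ∧ z ≤ x ∧ z ≤ y) from
          fun hc => hy1 ⟨hc.1.2, hc.2.2⟩), mul_zero]
    · simp only [if_neg hx1,
        if_neg (show ¬((x - s ≤ z ∧ y - s ≤ z) ∧ z ≤ x ∧ z ≤ y) from
          fun hc => hx1 ⟨hc.1.1, hc.2.1⟩), zero_mul]
    · simp only [if_neg hx1,
        if_neg (show ¬((x - s ≤ z ∧ y - s ≤ z) ∧ z ≤ x ∧ z ≤ y) from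
          fun hc => hx1 ⟨hc.1.1, hc.2.1⟩), zero_mul]
  simp only [h1]
  rw [show (fun _ : ℝ => (1:ℝ)) = (1 : ℝ → ℝ) from rfl]
  rw [MeasureTheory.integral_indicator_one measurableSet_Icc, Measure.real, Real.volume_Icc]
  have h2 : min x y - max (x - s) (y - s) = s - |x - y| := by
    rcases le_total x y with h | h
    · rw [abs_of_nonpos (by linarith : x - y ≤ 0), max_eq_right (by linarith),
        min_eq_left h]; ring
    · rw [abs_of_nonneg (by linarith : 0 ≤ x - y), max_eq_left (by linarith),
        min_eq_right h]; ring
  rw [h2]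
  rcases le_total (s - |x - y|) 0 with h | h
  · rw [ENNReal.ofReal_eq_zero.2 h]; simp [tri, max_eq_right h]
  · rw [ENNReal.toReal_ofReal h, tri, max_eq_left h]
lemma key1 {d x : ℝ} (hd : 0 < d) (hx : 0 < x) :
    Real.log (1/x) - aKer d x
      = (∫ s in Set.Ioc 0 d, cC d s * tri s x) + 2/d * tri d x := by
  have hxabs : |x| = x := abs_of_pos hx
  rcases le_or_gt d x with hdx | hxd
  · -- trivial case `d ≤ x`
    have h0 : Set.EqOn (fun s => cC d s * tri s x) 0 (Set.Ioc 0 d) := by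
      intro s hs
      simp only [Pi.zero_apply]
      rw [tri_eq_zero (by rw [hxabs]; exact le_trans hs.2 hdx), mul_zero]
    rw [MeasureTheory.setIntegral_congr_fun measurableSet_Ioc h0]
    rw [tri_eq_zero (by rw [hxabs]; exact hdx)]
    simp only [Pi.zero_apply, MeasureTheory.integral_zero, mul_zero, add_zero]
    rcases eq_or_lt_of_le hdx with heq | hlt
    · rw [← heq, aKer, if_pos le_rfl, div_self hd.ne', sub_eq_zero]
      ring
    · rw [aKer, if_neg (not_le.2 hlt), sub_self]
  · -- main case `x < d`
    have htrid : tri d x = d - x := by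
      rw [tri, hxabs, max_eq_left (by linarith)]
    -- split the integral
    have hsplit : Set.Ioc (0:ℝ) d = Set.Ioc 0 x ∪ Set.Ioc x d :=
      (Set.Ioc_union_Ioc_eq_Ioc hx.le hxd.le).symm
    have heq0 : Set.EqOn (fun s => cC d s * tri s x) 0 (Set.Ioc 0 x) := by
      intro s hs
      simp only [Pi.zero_apply]
      rw [tri_eq_zero (by rw [hxabs]; exact hs.2), mul_zero]
    have heq1 : Set.EqOn (fun s => cC d s * tri s x) (fun s => cC d s * (s - x))
        (Set.Ioc x d) := by
      intro s hs
      simp only [tri, hxabs, max_eq_left (by linarith [hs.1] : (0:ℝ) ≤ s - x)]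
    have hcont2 : ContinuousOn (fun s => cC d s * (s - x)) (Set.Icc x d) := by
      apply ContinuousOn.mul
      · unfold cC pP
        apply ContinuousOn.div
        · fun_prop
        · fun_prop
        · intro s hs
          exact pow_ne_zero 2 (ne_of_gt (lt_of_lt_of_le hx hs.1))
      · fun_prop
    have hI1 : MeasureTheory.IntegrableOn (fun s => cC d s * tri s x) (Set.Ioc 0 x) :=
      (MeasureTheory.integrableOn_congr_fun heq0 measurableSet_Ioc).2
        (MeasureTheory.integrableOn_zero)
    have hI2 : MeasureTheory.IntegrableOn (fun s => cC d s * tri s x) (Set.Ioc x d) := by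
      rw [MeasureTheory.integrableOn_congr_fun heq1 measurableSet_Ioc]
      exact (hcont2.integrableOn_Icc).mono_set Set.Ioc_subset_Icc_self
    rw [hsplit, MeasureTheory.setIntegral_union (Set.Ioc_disjoint_Ioc_of_le le_rfl)
      measurableSet_Ioc hI1 hI2]
    rw [MeasureTheory.setIntegral_congr_fun measurableSet_Ioc heq0]
    rw [MeasureTheory.setIntegral_congr_fun measurableSet_Ioc heq1]
    rw [← intervalIntegral.integral_of_le hxd.le]
    -- FTC
    set F : ℝ → ℝ := fun t => Real.log t + x * t⁻¹ + (-3/d^2) * t^2 + (6*x/d^2) * t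
      + (16/(3*d^3)) * t^3 + (-8*x/d^3) * t^2 + (-9/(4*d^4)) * t^4 + (3*x/d^4) * t^3 with hFdef
    have hftc : (∫ s in x..d, cC d s * (s - x)) = F d - F x := by
      apply intervalIntegral.integral_eq_sub_of_hasDerivAt
      · intro s hs
        rw [Set.uIcc_of_le hxd.le] at hs
        have hs0 : s ≠ 0 := ne_of_gt (lt_of_lt_of_le hx hs.1)
        have p1 : HasDerivAt (fun t : ℝ => t^2) (2*s) s := by
          simpa using hasDerivAt_pow 2 s
        have p2 : HasDerivAt (fun t : ℝ => t^3) (3*s^2) s := by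
          simpa using hasDerivAt_pow 3 s
        have p3 : HasDerivAt (fun t : ℝ => t^4) (4*s^3) s := by
          simpa using hasDerivAt_pow 4 s
        have pid : HasDerivAt (fun t : ℝ => t) 1 s := hasDerivAt_id s
        have hinv : HasDerivAt (fun t : ℝ => t⁻¹) (-(s^2)⁻¹) s := hasDerivAt_inv hs0
        have hF : HasDerivAt F (s⁻¹ + x * (-(s^2)⁻¹) + (-3/d^2)*(2*s) + (6*x/d^2)*1
            + (16/(3*d^3))*(3*s^2) + (-8*x/d^3)*(2*s) + (-9/(4*d^4))*(4*s^3)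
            + (3*x/d^4)*(3*s^2)) s := by
          exact (((((((Real.hasDerivAt_log hs0).add (hinv.const_mul x)).add
            (p1.const_mul (-3/d^2))).add (pid.const_mul (6*x/d^2))).add
            (p2.const_mul (16/(3*d^3)))).add (p1.const_mul (-8*x/d^3))).add
            (p3.const_mul (-9/(4*d^4)))).add (p2.const_mul (3*x/d^4))
        refine hF.congr_deriv ?_
        unfold cC pP
        field_simp
        ring
      · exact ((hcont2.mono (by rw [Set.uIcc_of_le hxd.le])).intervalIntegrable)
    rw [hftc, htrid, aKer, if_pos hxd.le]
    unfold a0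
    rw [hFdef]
    simp only [one_div, Real.log_inv, Pi.zero_apply, MeasureTheory.integral_zero]
    field_simp
    ring
lemma key3 (f : ℝ → ℝ) (hf : Continuous f) (hsupp : HasCompactSupport f) {s : ℝ}
    (hs : 0 < s) :
    0 ≤ ∫ p : ℝ × ℝ, tri s (p.1 - p.2) * f p.1 * f p.2
        ∂((volume : Measure ℝ).prod volume) := by
  obtain ⟨C, hC⟩ := hsupp.exists_bound_of_continuous hf
  have hC0 : 0 ≤ C := le_trans (norm_nonneg _) (hC 0)
  obtain ⟨R, hR0, hRsub⟩ := hsupp.isBounded.subset_closedBall_lt 0 0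
  have hsubI : ∀ x, f x ≠ 0 → x ∈ Set.Icc (-R) R := by
    intro x hx
    have hmem := hRsub (subset_tsupport f (Function.mem_support.2 hx))
    rwa [Real.closedBall_eq_Icc, zero_sub, zero_add] at hmem
  set F : ℝ × ℝ → ℝ → ℝ := fun p z =>
    ((if p.1 - s ≤ z ∧ z ≤ p.1 then (1:ℝ) else 0) * f p.1) *
    ((if p.2 - s ≤ z ∧ z ≤ p.2 then (1:ℝ) else 0) * f p.2) with hFdef
  have hmeasF : AEStronglyMeasurable (Function.uncurry F)
      (((volume : Measure ℝ).prod volume).prod volume) := by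
    have m1 : Measurable (fun q : (ℝ × ℝ) × ℝ =>
        if q.1.1 - s ≤ q.2 ∧ q.2 ≤ q.1.1 then (1:ℝ) else 0) := by
      refine Measurable.ite ?_ measurable_const measurable_const
      have ha : Measurable fun q : (ℝ × ℝ) × ℝ => q.1.1 - s :=
        (measurable_fst.comp measurable_fst).sub measurable_const
      have hb : Measurable fun q : (ℝ × ℝ) × ℝ => q.1.1 :=
        measurable_fst.comp measurable_fst
      exact (measurableSet_le ha measurable_snd).inter (measurableSet_le measurable_snd hb)
    have m2 : Measurable (fun q : (ℝ × ℝ) × ℝ =>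
        if q.1.2 - s ≤ q.2 ∧ q.2 ≤ q.1.2 then (1:ℝ) else 0) := by
      refine Measurable.ite ?_ measurable_const measurable_const
      have ha : Measurable fun q : (ℝ × ℝ) × ℝ => q.1.2 - s :=
        (measurable_snd.comp measurable_fst).sub measurable_const
      have hb : Measurable fun q : (ℝ × ℝ) × ℝ => q.1.2 :=
        measurable_snd.comp measurable_fst
      exact (measurableSet_le ha measurable_snd).inter (measurableSet_le measurable_snd hb)
    have mf1 : Measurable (fun q : (ℝ × ℝ) × ℝ => f q.1.1) := by fun_prop
    have mf2 : Measurable (fun q : (ℝ × ℝ) × ℝ => f q.1.2) := by fun_prop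
    exact ((m1.mul mf1).mul (m2.mul mf2)).aestronglyMeasurable
  set S : Set ((ℝ × ℝ) × ℝ) :=
    (Set.Icc (-R) R ×ˢ Set.Icc (-R) R) ×ˢ Set.Icc (-R - s) R with hSdef
  have hScompact : IsCompact S := (isCompact_Icc.prod isCompact_Icc).prod isCompact_Icc
  have hSmeas : MeasurableSet S := (measurableSet_Icc.prod measurableSet_Icc).prod
    measurableSet_Icc
  have hintF : Integrable (Function.uncurry F)
      (((volume : Measure ℝ).prod volume).prod volume) := by
    refine Integrable.mono' (g := S.indicator fun _ => C * C) ?_ hmeasF ?_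
    · rw [integrable_indicator_iff hSmeas]
      exact integrableOn_const hScompact.measure_lt_top.ne
    · refine Filter.Eventually.of_forall fun q => ?_
      rcases eq_or_ne (Function.uncurry F q) 0 with h | h
      · rw [h, norm_zero]
        exact Set.indicator_nonneg (fun _ _ => mul_nonneg hC0 hC0) q
      · have hferm : Function.uncurry F q =
            ((if q.1.1 - s ≤ q.2 ∧ q.2 ≤ q.1.1 then (1:ℝ) else 0) * f q.1.1) *
            ((if q.1.2 - s ≤ q.2 ∧ q.2 ≤ q.1.2 then (1:ℝ) else 0) * f q.1.2) := rfl
        have hx1 : f q.1.1 ≠ 0 := by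
          intro h0; exact h (by rw [hferm, h0]; ring)
        have hx2 : f q.1.2 ≠ 0 := by
          intro h0; exact h (by rw [hferm, h0]; ring)
        have hz1 : q.1.1 - s ≤ q.2 ∧ q.2 ≤ q.1.1 := by
          by_contra h0; exact h (by rw [hferm, if_neg h0]; ring)
        have hq : q ∈ S := by
          refine ⟨⟨hsubI _ hx1, hsubI _ hx2⟩, ⟨?_, ?_⟩⟩
          · have := (hsubI _ hx1).1; linarith [hz1.1]
          · have := (hsubI _ hx1).2; linarith [hz1.2]
        rw [Set.indicator_of_mem hq]
        have e1 : |if q.1.1 - s ≤ q.2 ∧ q.2 ≤ q.1.1 then (1:ℝ) else 0| ≤ 1 := by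
          split_ifs <;> norm_num
        have e2 : |if q.1.2 - s ≤ q.2 ∧ q.2 ≤ q.1.2 then (1:ℝ) else 0| ≤ 1 := by
          split_ifs <;> norm_num
        have hb1 : |(if q.1.1 - s ≤ q.2 ∧ q.2 ≤ q.1.1 then (1:ℝ) else 0) * f q.1.1| ≤ C := by
          rw [abs_mul]
          calc |if q.1.1 - s ≤ q.2 ∧ q.2 ≤ q.1.1 then (1:ℝ) else 0| * |f q.1.1|
              ≤ 1 * C := mul_le_mul e1 (hC _) (abs_nonneg _) zero_le_one
            _ = C := one_mul C
        have hb2 : |(if q.1.2 - s ≤ q.2 ∧ q.2 ≤ q.1.2 then (1:ℝ) else 0) * f q.1.2| ≤ C := by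
          rw [abs_mul]
          calc |if q.1.2 - s ≤ q.2 ∧ q.2 ≤ q.1.2 then (1:ℝ) else 0| * |f q.1.2|
              ≤ 1 * C := mul_le_mul e2 (hC _) (abs_nonneg _) zero_le_one
            _ = C := one_mul C
        rw [Real.norm_eq_abs, Function.uncurry, hFdef, abs_mul]
        exact mul_le_mul hb1 hb2 (abs_nonneg _) hC0
  have hrw : ∀ p : ℝ × ℝ, tri s (p.1 - p.2) * f p.1 * f p.2 = ∫ z, F p z := by
    intro p
    have hswap : (fun z => F p z) = fun z =>
        ((if p.1 - s ≤ z ∧ z ≤ p.1 then (1:ℝ) else 0) *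
          (if p.2 - s ≤ z ∧ z ≤ p.2 then (1:ℝ) else 0)) * (f p.1 * f p.2) := by
      funext z; rw [hFdef]; ring
    rw [hswap, MeasureTheory.integral_mul_const, key2]
    ring
  simp only [hrw]
  rw [MeasureTheory.integral_integral_swap hintF]
  apply MeasureTheory.integral_nonneg
  intro z
  have hpm := MeasureTheory.integral_prod_mul (μ := (volume : Measure ℝ))
    (ν := (volume : Measure ℝ))
    (fun x => (if x - s ≤ z ∧ z ≤ x then (1:ℝ) else 0) * f x)
    (fun x => (if x - s ≤ z ∧ z ≤ x then (1:ℝ) else 0) * f x)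
  simp only [Pi.zero_apply]
  rw [show (fun p : ℝ × ℝ => F p z) = fun p : ℝ × ℝ =>
    ((if p.1 - s ≤ z ∧ z ≤ p.1 then (1:ℝ) else 0) * f p.1) *
    ((if p.2 - s ≤ z ∧ z ≤ p.2 then (1:ℝ) else 0) * f p.2) from rfl, hpm]
  exact mul_self_nonneg _
lemma key4 {d : ℝ} (hd : 0 < d) (f : ℝ → ℝ) (hf : Continuous f)
    (C R : ℝ) (hC : ∀ x, |f x| ≤ C) (hC0 : 0 ≤ C) (hR0 : 0 < R)
    (hsubI : ∀ x, f x ≠ 0 → x ∈ Set.Icc (-R) R)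
    {s : ℝ} (hs : s ∈ Set.Ioc 0 d) :
    Integrable (fun p : ℝ × ℝ => cC d s * tri s (p.1 - p.2) * f p.1 * f p.2)
      ((volume : Measure ℝ).prod volume) ∧
    (∫ p : ℝ × ℝ, ‖cC d s * tri s (p.1 - p.2) * f p.1 * f p.2‖
      ∂((volume : Measure ℝ).prod volume)) ≤ 128 * R * C^2 := by
  obtain ⟨hs0, hsd⟩ := hs
  set T : Set (ℝ × ℝ) := {p | -R ≤ p.1 ∧ p.1 ≤ R ∧ |p.1 - p.2| ≤ s} with hTdef
  have hTmeas : MeasurableSet T := by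
    refine IsClosed.measurableSet ?_
    refine IsClosed.inter (isClosed_le continuous_const continuous_fst) ?_
    exact IsClosed.inter (isClosed_le continuous_fst continuous_const)
      (isClosed_le ((continuous_fst.sub continuous_snd).abs) continuous_const)
  have hTvol : ((volume : Measure ℝ).prod volume) T
      = ENNReal.ofReal (2*s) * ENNReal.ofReal (2*R) := by
    rw [MeasureTheory.Measure.prod_apply hTmeas]
    have hsect : ∀ x : ℝ, Prod.mk x ⁻¹' T
        = if x ∈ Set.Icc (-R) R then Set.Icc (x - s) (x + s) else ∅ := by
      intro x
      by_cases hx : x ∈ Set.Icc (-R) R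
      · rw [if_pos hx]
        ext y
        simp only [hTdef, Set.mem_preimage, Set.mem_setOf_eq, Set.mem_Icc]
        rw [Set.mem_Icc] at hx
        constructor
        · rintro ⟨-, -, h3⟩
          rw [abs_le] at h3
          exact ⟨by linarith [h3.1], by linarith [h3.2]⟩
        · rintro ⟨h1, h2⟩
          exact ⟨hx.1, hx.2, by rw [abs_le]; constructor <;> linarith⟩
      · rw [if_neg hx]
        ext y
        simp only [hTdef, Set.mem_preimage, Set.mem_setOf_eq, Set.mem_empty_iff_false,
          iff_false]
        rw [Set.mem_Icc] at hx
        rintro ⟨h1, h2, -⟩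
        exact hx ⟨h1, h2⟩
    calc (∫⁻ x, volume (Prod.mk x ⁻¹' T))
        = ∫⁻ x, (Set.Icc (-R) R).indicator (fun _ => ENNReal.ofReal (2*s)) x := by
          apply MeasureTheory.lintegral_congr
          intro x
          rw [hsect x, Set.indicator_apply]
          by_cases hx : x ∈ Set.Icc (-R) R
          · rw [if_pos hx, if_pos hx, Real.volume_Icc, show x + s - (x - s) = 2*s by ring]
          · rw [if_neg hx, if_neg hx, MeasureTheory.measure_empty]
      _ = ENNReal.ofReal (2*s) * volume (Set.Icc (-R) R) :=
          MeasureTheory.lintegral_indicator_const measurableSet_Icc _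
      _ = ENNReal.ofReal (2*s) * ENNReal.ofReal (2*R) := by
          rw [Real.volume_Icc, show R - -R = 2*R by ring]
  have hTlt : ((volume : Measure ℝ).prod volume) T < ⊤ := by
    rw [hTvol]
    exact ENNReal.mul_lt_top ENNReal.ofReal_lt_top ENNReal.ofReal_lt_top
  have hDint : Integrable (T.indicator fun _ => 32*C^2/s) ((volume : Measure ℝ).prod volume) :=
    (integrable_indicator_iff hTmeas).2 (integrableOn_const hTlt.ne)
  have hcc : |cC d s| ≤ 32/s^2 := by
    rw [cC, abs_div, abs_of_nonneg (sq_nonneg s)]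
    gcongr
    exact pP_abs_le (div_nonneg hs0.le hd.le) ((div_le_one hd).2 hsd)
  have hbound : ∀ p : ℝ × ℝ, ‖cC d s * tri s (p.1 - p.2) * f p.1 * f p.2‖
      ≤ T.indicator (fun _ => 32*C^2/s) p := by
    intro p
    rcases eq_or_ne (cC d s * tri s (p.1 - p.2) * f p.1 * f p.2) 0 with h | h
    · rw [h, norm_zero]
      exact Set.indicator_nonneg (fun _ _ => by positivity) p
    · have hf1 : f p.1 ≠ 0 := by intro h0; exact h (by rw [h0]; ring)
      have hf2 : f p.2 ≠ 0 := by intro h0; exact h (by rw [h0]; ring)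
      have htr : tri s (p.1 - p.2) ≠ 0 := by intro h0; exact h (by rw [h0]; ring)
      have habs : |p.1 - p.2| ≤ s := by
        by_contra hcon
        exact htr (tri_eq_zero (le_of_lt (not_le.1 hcon)))
      have hp : p ∈ T := ⟨(hsubI _ hf1).1, (hsubI _ hf1).2, habs⟩
      rw [Set.indicator_of_mem hp, Real.norm_eq_abs, abs_mul, abs_mul, abs_mul]
      have h1 : |cC d s| * |tri s (p.1 - p.2)| ≤ (32/s^2) * s := by
        apply mul_le_mul hcc _ (abs_nonneg _) (by positivity)
        rw [abs_of_nonneg (tri_nonneg _ _)]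
        exact tri_le_s _ hs0.le
      have h2 : |cC d s| * |tri s (p.1 - p.2)| * |f p.1| ≤ (32/s^2) * s * C :=
        mul_le_mul h1 (hC _) (abs_nonneg _) (by positivity)
      calc |cC d s| * |tri s (p.1 - p.2)| * |f p.1| * |f p.2|
          ≤ (32/s^2) * s * C * C := mul_le_mul h2 (hC _) (abs_nonneg _) (by positivity)
        _ = 32*C^2/s := by field_simp
  have hGsInt : Integrable (fun p : ℝ × ℝ => cC d s * tri s (p.1 - p.2) * f p.1 * f p.2)
      ((volume : Measure ℝ).prod volume) := by
    refine Integrable.mono' hDint ?_ (Filter.Eventually.of_forall hbound)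
    have : Continuous fun p : ℝ × ℝ => cC d s * tri s (p.1 - p.2) * f p.1 * f p.2 := by
      apply Continuous.mul
      apply Continuous.mul
      apply Continuous.mul continuous_const
      · unfold tri
        fun_prop
      · exact hf.comp continuous_fst
      · exact hf.comp continuous_snd
    exact this.aestronglyMeasurable
  refine ⟨hGsInt, ?_⟩
  calc (∫ p : ℝ × ℝ, ‖cC d s * tri s (p.1 - p.2) * f p.1 * f p.2‖
        ∂((volume : Measure ℝ).prod volume))
      ≤ ∫ p : ℝ × ℝ, T.indicator (fun _ => 32*C^2/s) p ∂((volume : Measure ℝ).prod volume) :=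
        MeasureTheory.integral_mono hGsInt.norm hDint hbound
    _ = (((volume : Measure ℝ).prod volume) T).toReal • (32*C^2/s) :=
        MeasureTheory.integral_indicator_const _ hTmeas
    _ ≤ 128 * R * C^2 := by
        rw [hTvol, ENNReal.toReal_mul, ENNReal.toReal_ofReal (by positivity),
          ENNReal.toReal_ofReal (by positivity), smul_eq_mul]
        rw [show 2*s*(2*R) * (32*C^2/s) = 128*R*C^2 * (s/s) by ring, div_self hs0.ne']
        rw [mul_one]
/-- For `d > 0`, the kernel `log|λ−μ|⁻¹ − a_d(|λ−μ|)`, which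
vanishes for `|λ−μ| ≥ d`, is positive semidefinite on continuous compactly
supported functions: `∫∫ [log(1/|λ−μ|) − a_d(|λ−μ|)] f(λ) f(μ) dλ dμ ≥ 0`. -/
theorem statement9 (d : ℝ) (hd : 0 < d) (f : ℝ → ℝ) (hf : Continuous f)
    (hsupp : HasCompactSupport f) :
    0 ≤ ∫ lam : ℝ, ∫ μ : ℝ,
        (Real.log (1 / |lam - μ|) - aKer d |lam - μ|) * f lam * f μ := by
  obtain ⟨C, hCn⟩ := hsupp.exists_bound_of_continuous hf
  have hC : ∀ x, |f x| ≤ C := fun x => by simpa [Real.norm_eq_abs] using hCn x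
  have hC0 : 0 ≤ C := le_trans (abs_nonneg _) (hC 0)
  obtain ⟨R, hR0, hRsub⟩ := hsupp.isBounded.subset_closedBall_lt 0 0
  have hsubI : ∀ x, f x ≠ 0 → x ∈ Set.Icc (-R) R := by
    intro x hx
    have hmem := hRsub (subset_tsupport f (Function.mem_support.2 hx))
    rwa [Real.closedBall_eq_Icc, zero_sub, zero_add] at hmem
  -- the parametrized triangle kernel
  have hmeasG : AEStronglyMeasurable
      (Function.uncurry fun (p : ℝ × ℝ) (t : ℝ) => cC d t * tri t (p.1 - p.2) * f p.1 * f p.2)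
      (((volume : Measure ℝ).prod volume).prod (volume.restrict (Set.Ioc 0 d))) := by
    have h1 : Measurable fun q : (ℝ × ℝ) × ℝ => cC d q.2 := by
      unfold cC pP
      apply Measurable.div
      · fun_prop
      · fun_prop
    have h2 : Measurable fun q : (ℝ × ℝ) × ℝ => tri q.2 (q.1.1 - q.1.2) := by
      have : Continuous fun q : (ℝ × ℝ) × ℝ => tri q.2 (q.1.1 - q.1.2) := by
        unfold tri; fun_prop
      exact this.measurable
    have h3 : Measurable fun q : (ℝ × ℝ) × ℝ => f q.1.1 :=
      hf.measurable.comp (measurable_fst.comp measurable_fst)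
    have h4 : Measurable fun q : (ℝ × ℝ) × ℝ => f q.1.2 :=
      hf.measurable.comp (measurable_snd.comp measurable_fst)
    exact (((h1.mul h2).mul h3).mul h4).aestronglyMeasurable
  have hGint : Integrable
      (Function.uncurry fun (p : ℝ × ℝ) (t : ℝ) => cC d t * tri t (p.1 - p.2) * f p.1 * f p.2)
      (((volume : Measure ℝ).prod volume).prod (volume.restrict (Set.Ioc 0 d))) := by
    rw [MeasureTheory.integrable_prod_iff' hmeasG]
    constructor
    · filter_upwards [MeasureTheory.ae_restrict_mem measurableSet_Ioc] with t ht
      exact (key4 hd f hf C R hC hC0 hR0 hsubI ht).1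
    · have hmeas2 : AEStronglyMeasurable
          (fun t : ℝ => ∫ p : ℝ × ℝ, ‖(Function.uncurry fun (p : ℝ × ℝ) (t : ℝ) =>
              cC d t * tri t (p.1 - p.2) * f p.1 * f p.2) (p, t)‖
            ∂((volume : Measure ℝ).prod volume)) (volume.restrict (Set.Ioc 0 d)) :=
        (hmeasG.norm.prod_swap).integral_prod_right'
      refine Integrable.mono' (g := fun _ => 128 * R * C^2) ?_ hmeas2 ?_
      · exact integrableOn_const measure_Ioc_lt_top.ne
      · filter_upwards [MeasureTheory.ae_restrict_mem measurableSet_Ioc] with t ht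
        have h2 := (key4 hd f hf C R hC hC0 hR0 hsubI ht).2
        rw [Real.norm_eq_abs,
          abs_of_nonneg (MeasureTheory.integral_nonneg fun p => norm_nonneg _)]
        exact h2
  -- integrability of the two pieces on ℝ²
  have hint1 : Integrable (fun p : ℝ × ℝ =>
      (∫ t in Set.Ioc 0 d, cC d t * tri t (p.1 - p.2)) * f p.1 * f p.2)
      ((volume : Measure ℝ).prod volume) := by
    have h := hGint.integral_prod_left
    refine h.congr (Filter.Eventually.of_forall fun p => ?_)
    simp only [Function.uncurry_apply_pair]
    rw [MeasureTheory.integral_mul_const, MeasureTheory.integral_mul_const]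
  have hint2 : Integrable (fun p : ℝ × ℝ => 2/d * tri d (p.1 - p.2) * f p.1 * f p.2)
      ((volume : Measure ℝ).prod volume) := by
    have hBmeas : MeasurableSet (Set.Icc (-R) R ×ˢ Set.Icc (-R) R) :=
      measurableSet_Icc.prod measurableSet_Icc
    have hBlt : ((volume : Measure ℝ).prod volume) (Set.Icc (-R) R ×ˢ Set.Icc (-R) R) < ⊤ :=
      (isCompact_Icc.prod isCompact_Icc).measure_lt_top
    refine Integrable.mono'
      ((integrable_indicator_iff hBmeas).2 (integrableOn_const hBlt.ne))
      (g := (Set.Icc (-R) R ×ˢ Set.Icc (-R) R).indicator fun _ => 2 * C^2)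
      ?_ (Filter.Eventually.of_forall ?_)
    · have : Continuous fun p : ℝ × ℝ => 2/d * tri d (p.1 - p.2) * f p.1 * f p.2 := by
        apply Continuous.mul
        apply Continuous.mul
        apply Continuous.mul continuous_const
        · unfold tri; fun_prop
        · exact hf.comp continuous_fst
        · exact hf.comp continuous_snd
      exact this.aestronglyMeasurable
    · intro p
      rcases eq_or_ne (2/d * tri d (p.1 - p.2) * f p.1 * f p.2) 0 with h | h
      · rw [h, norm_zero]
        exact Set.indicator_nonneg (fun _ _ => by positivity) p
      · have hf1 : f p.1 ≠ 0 := by intro h0; exact h (by rw [h0]; ring)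
        have hf2 : f p.2 ≠ 0 := by intro h0; exact h (by rw [h0]; ring)
        have hp : p ∈ Set.Icc (-R) R ×ˢ Set.Icc (-R) R := ⟨hsubI _ hf1, hsubI _ hf2⟩
        rw [Set.indicator_of_mem hp, Real.norm_eq_abs, abs_mul, abs_mul, abs_mul]
        have h1 : |2/d| * |tri d (p.1 - p.2)| ≤ (2/d) * d := by
          rw [abs_of_nonneg (by positivity : (0:ℝ) ≤ 2/d), abs_of_nonneg (tri_nonneg _ _)]
          exact mul_le_mul_of_nonneg_left (tri_le_s _ hd.le) (by positivity)
        have h2 : |2/d| * |tri d (p.1 - p.2)| * |f p.1| ≤ (2/d) * d * C :=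
          mul_le_mul h1 (hC _) (abs_nonneg _) (by positivity)
        calc |2/d| * |tri d (p.1 - p.2)| * |f p.1| * |f p.2|
            ≤ (2/d) * d * C * C := mul_le_mul h2 (hC _) (abs_nonneg _) (by positivity)
          _ = 2 * C^2 := by field_simp
  -- a.e. identity
  have hdiag : ((volume : Measure ℝ).prod volume) {p : ℝ × ℝ | p.1 = p.2} = 0 := by
    have hdm : MeasurableSet {p : ℝ × ℝ | p.1 = p.2} :=
      (isClosed_eq continuous_fst continuous_snd).measurableSet
    rw [MeasureTheory.Measure.prod_apply hdm]
    have hpre : ∀ x : ℝ, Prod.mk x ⁻¹' {p : ℝ × ℝ | p.1 = p.2} = {x} := by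
      intro x; ext y; simp [eq_comm]
    simp [hpre]
  have hae : (fun p : ℝ × ℝ => (Real.log (1/|p.1 - p.2|) - aKer d |p.1 - p.2|) * f p.1 * f p.2)
      =ᵐ[(volume : Measure ℝ).prod volume]
      (fun p : ℝ × ℝ => (∫ t in Set.Ioc 0 d, cC d t * tri t (p.1 - p.2)) * f p.1 * f p.2
        + 2/d * tri d (p.1 - p.2) * f p.1 * f p.2) := by
    have hsub : {p : ℝ × ℝ | p.1 ≠ p.2} ∈ MeasureTheory.ae ((volume : Measure ℝ).prod volume) := by
      rw [MeasureTheory.mem_ae_iff]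
      have hcompl : {p : ℝ × ℝ | p.1 ≠ p.2}ᶜ = {p : ℝ × ℝ | p.1 = p.2} := by
        ext p; simp
      rw [hcompl]; exact hdiag
    filter_upwards [hsub] with p hp
    have hx : 0 < |p.1 - p.2| := abs_pos.2 (sub_ne_zero.2 hp)
    have h := key1 hd hx
    simp only [tri_abs] at h
    rw [h]
    ring
  have hFint : Integrable
      (Function.uncurry fun lam μ : ℝ =>
        (Real.log (1 / |lam - μ|) - aKer d |lam - μ|) * f lam * f μ)
      ((volume : Measure ℝ).prod volume) :=
    (hint1.add hint2).congr hae.symm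
  rw [MeasureTheory.integral_integral hFint]
  rw [MeasureTheory.integral_congr_ae hae, MeasureTheory.integral_add hint1 hint2]
  apply add_nonneg
  · have hre : (fun p : ℝ × ℝ =>
        (∫ t in Set.Ioc 0 d, cC d t * tri t (p.1 - p.2)) * f p.1 * f p.2)
        = fun p : ℝ × ℝ => ∫ t in Set.Ioc 0 d, cC d t * tri t (p.1 - p.2) * f p.1 * f p.2 := by
      funext p
      rw [MeasureTheory.integral_mul_const, MeasureTheory.integral_mul_const]
    rw [hre, MeasureTheory.integral_integral_swap hGint]
    apply MeasureTheory.setIntegral_nonneg measurableSet_Ioc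
    intro t ht
    have hkey := key3 f hf hsupp ht.1
    have hsplit : (fun p : ℝ × ℝ => cC d t * tri t (p.1 - p.2) * f p.1 * f p.2)
        = fun p : ℝ × ℝ => cC d t * (tri t (p.1 - p.2) * f p.1 * f p.2) := by
      funext p; ring
    rw [hsplit, MeasureTheory.integral_const_mul]
    have hccn : 0 ≤ cC d t :=
      div_nonneg (pP_nonneg (div_nonneg ht.1.le hd.le) ((div_le_one hd).2 ht.2)) (sq_nonneg t)
    exact mul_nonneg hccn hkey
  · have hsplit : (fun p : ℝ × ℝ => 2/d * tri d (p.1 - p.2) * f p.1 * f p.2)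
        = fun p : ℝ × ℝ => 2/d * (tri d (p.1 - p.2) * f p.1 * f p.2) := by
      funext p; ring
    rw [hsplit, MeasureTheory.integral_const_mul]
    exact mul_nonneg (by positivity) (key3 f hf hsupp hd)
end
end

section
/- Let d > 0 and let f : (0,d] → [0,∞) be nonincreasing with λ ↦ λ f(λ) integrable on (0,d). Then for every k > 0 the integral ∫_0^d f(λ) sin(kλ) dλ converges absolutely and is ≥ 0. If moreover f is strictly decreasing on (0,d), the integral is strictly positive. -/
open MeasureTheory Set

private lemma statement13_int (d : ℝ) (_hd : 0 < d) (f : ℝ → ℝ)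
    (hmono : AntitoneOn f (Ioc 0 d)) (hnonneg : ∀ lam ∈ Ioc (0 : ℝ) d, 0 ≤ f lam)
    (hint : IntegrableOn (fun lam => lam * f lam) (Ioo 0 d)) (k : ℝ) (hk : 0 < k) :
    IntegrableOn (fun lam => f lam * Real.sin (k * lam)) (Ioc 0 d) := by
  have h1 : AEMeasurable f (volume.restrict (Ioc 0 d)) :=
    aemeasurable_restrict_of_antitoneOn measurableSet_Ioc hmono
  have hmeas : AEStronglyMeasurable (fun x => f x * Real.sin (k * x))
      (volume.restrict (Ioc (0:ℝ) d)) :=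
    (h1.mul ((Real.measurable_sin.comp (measurable_const_mul k)).aemeasurable)).aestronglyMeasurable
  have hint' : IntegrableOn (fun x => k * (x * f x)) (Ioc 0 d) := by
    have h2 : IntegrableOn (fun x => x * f x) (Ioc 0 d) :=
      (integrableOn_Ioc_iff_integrableOn_Ioo).mpr hint
    exact h2.const_mul k
  refine Integrable.mono hint' hmeas ?_
  rw [ae_restrict_iff' measurableSet_Ioc]
  filter_upwards with x hx
  have hx0 : 0 < x := hx.1
  have hfx := hnonneg x hx
  have hs : |Real.sin (k*x)| ≤ k * x := by
    calc |Real.sin (k*x)| ≤ |k*x| := Real.abs_sin_le_abs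
    _ = k*x := abs_of_pos (by positivity)
  rw [Real.norm_eq_abs, Real.norm_eq_abs, abs_mul]
  calc |f x| * |Real.sin (k*x)| = f x * |Real.sin (k*x)| := by rw [abs_of_nonneg hfx]
  _ ≤ f x * (k*x) := mul_le_mul_of_nonneg_left hs hfx
  _ = k * (x * f x) := by ring
  _ ≤ |k * (x * f x)| := le_abs_self _

open intervalIntegral in
private lemma statement13_aux (d : ℝ) (hd : 0 < d) (f : ℝ → ℝ)
    (hmono : AntitoneOn f (Ioc 0 d)) (hnonneg : ∀ lam ∈ Ioc (0 : ℝ) d, 0 ≤ f lam)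
    (k : ℝ) (hk : 0 < k)
    (Hint : IntegrableOn (fun lam => f lam * Real.sin (k * lam)) (Ioc 0 d)) :
      0 ≤ (∫ lam in Ioc (0 : ℝ) d, f lam * Real.sin (k * lam)) ∧
      (StrictAntiOn f (Ioo 0 d) →
        0 < ∫ lam in Ioc (0 : ℝ) d, f lam * Real.sin (k * lam)) := by
  set p := Real.pi / k with hp
  have hp0 : 0 < p := div_pos Real.pi_pos hk
  have hkp : k * p = Real.pi := by rw [hp]; field_simp
  -- interval integrability on subintervals
  have hII : ∀ a b : ℝ, 0 ≤ a → a ≤ b → b ≤ d →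
      IntervalIntegrable (fun x => f x * Real.sin (k*x)) volume a b := by
    intro a b ha hab hbd
    rw [intervalIntegrable_iff_integrableOn_Ioc_of_le hab]
    exact Hint.mono_set (Ioc_subset_Ioc ha hbd)
  -- shifted integrand integrable
  have hIIs : ∀ a b : ℝ, 0 ≤ a → a ≤ b → b + p ≤ d →
      IntervalIntegrable (fun x => f (x+p) * Real.sin (k*x)) volume a b := by
    intro a b ha hab hbd
    have h0 : IntervalIntegrable (fun x => f x * Real.sin (k*x)) volume (a+p) (b+p) :=
      hII _ _ (by linarith) (by linarith) hbd
    have h1 := (h0.comp_add_right p).neg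
    have h2 : (fun x => f (x+p) * Real.sin (k*x))
        = fun x => -(f (x+p) * Real.sin (k*(x+p))) := by
      funext x
      have : k*(x+p) = k*x + Real.pi := by rw [mul_add, hkp]
      rw [this, Real.sin_add_pi]; ring
    rw [h2]
    simpa [Pi.neg_def] using h1
  -- sin is nonneg on [2pj, 2pj+p]
  have hsin : ∀ (j : ℕ) (x : ℝ), 2*p*j ≤ x → x ≤ 2*p*j + p → 0 ≤ Real.sin (k*x) := by
    intro j x h1 h2
    have e1 : k*(2*p*(j:ℝ)) = (j:ℝ)*(2*Real.pi) := by rw [hp]; field_simp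
    have e2 : k*(2*p*(j:ℝ)+p) = (j:ℝ)*(2*Real.pi) + Real.pi := by rw [hp]; field_simp
    have h1' : (j:ℝ)*(2*Real.pi) ≤ k*x := by
      rw [← e1]; exact mul_le_mul_of_nonneg_left h1 hk.le
    have h2' : k*x ≤ (j:ℝ)*(2*Real.pi) + Real.pi := by
      rw [← e2]; exact mul_le_mul_of_nonneg_left h2 hk.le
    have e3 : Real.sin (k*x) = Real.sin (k*x - (j:ℤ)*(2*Real.pi)) := by
      conv_lhs => rw [show k*x = (k*x - (j:ℤ)*(2*Real.pi)) + (j:ℤ)*(2*Real.pi) by ring]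
      rw [Real.sin_add_int_mul_two_pi]
    rw [e3]
    apply Real.sin_nonneg_of_nonneg_of_le_pi <;> push_cast <;> linarith
  -- strict version: sin positive on (2pj, 2pj+p)
  have hsinpos : ∀ x : ℝ, 0 < x → x < p → 0 < Real.sin (k*x) := by
    intro x h1 h2
    apply Real.sin_pos_of_pos_of_lt_pi (by positivity)
    have := mul_lt_mul_of_pos_left h2 hk
    rwa [hkp] at this
  -- the split identity
  have hsplit : ∀ (j : ℕ) (b : ℝ), 2*p*j + p ≤ b → b ≤ 2*p*j + 2*p → b ≤ d →
      (∫ x in (2*p*(j:ℝ))..b, f x * Real.sin (k*x)) =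
        (∫ x in (2*p*(j:ℝ))..(b-p), (f x - f (x+p)) * Real.sin (k*x)) +
        ∫ x in (b-p)..(2*p*(j:ℝ)+p), f x * Real.sin (k*x) := by
    intro j b h1 h2 hbd
    have ha0 : (0:ℝ) ≤ 2*p*(j:ℝ) := by positivity
    have i1 : IntervalIntegrable (fun x => f x * Real.sin (k*x)) volume (2*p*(j:ℝ)) (b-p) :=
      hII _ _ ha0 (by linarith) (by linarith)
    have i2 : IntervalIntegrable (fun x => f x * Real.sin (k*x)) volume (b-p) (2*p*(j:ℝ)+p) :=
      hII _ _ (by linarith) (by linarith) (by linarith)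
    have i3 : IntervalIntegrable (fun x => f x * Real.sin (k*x)) volume (2*p*(j:ℝ)+p) b :=
      hII _ _ (by linarith) (by linarith) hbd
    have i4 : IntervalIntegrable (fun x => f (x+p) * Real.sin (k*x)) volume (2*p*(j:ℝ)) (b-p) :=
      hIIs _ _ ha0 (by linarith) (by linarith)
    have add1 := integral_add_adjacent_intervals (μ := volume) i1 (i2.trans i3)
    have add2 := integral_add_adjacent_intervals (μ := volume) i2 i3
    -- express the third piece as shifted integral
    have e4 : (∫ x in (2*p*(j:ℝ)+p)..b, f x * Real.sin (k*x))
        = ∫ x in (2*p*(j:ℝ))..(b-p), -(f (x+p) * Real.sin (k*x)) := by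
      have e5 := integral_comp_add_right (a := 2*p*(j:ℝ)) (b := b-p)
        (fun y => f y * Real.sin (k*y)) p
      rw [sub_add_cancel] at e5
      rw [← e5]
      apply integral_congr
      intro x _
      have : k*(x+p) = k*x + Real.pi := by rw [mul_add, hkp]
      simp only [this, Real.sin_add_pi]; ring
    have e6 : (∫ x in (2*p*(j:ℝ))..(b-p), f x * Real.sin (k*x))
        + (∫ x in (2*p*(j:ℝ)+p)..b, f x * Real.sin (k*x))
        = ∫ x in (2*p*(j:ℝ))..(b-p), (f x - f (x+p)) * Real.sin (k*x) := by
      rw [e4, intervalIntegral.integral_neg, ← sub_eq_add_neg,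
        ← intervalIntegral.integral_sub i1 i4]
      apply integral_congr
      intro x _; ring
    linarith
  -- nonnegativity of first piece
  have hA : ∀ (j : ℕ) (b : ℝ), 2*p*j + p ≤ b → b ≤ 2*p*j + 2*p → b ≤ d →
      0 ≤ ∫ x in (2*p*(j:ℝ))..(b-p), (f x - f (x+p)) * Real.sin (k*x) := by
    intro j b h1 h2 hbd
    have ha0 : (0:ℝ) ≤ 2*p*(j:ℝ) := by positivity
    apply intervalIntegral.integral_nonneg (by linarith)
    intro x hx
    rcases (ha0.trans hx.1).eq_or_lt with h0 | h0
    · rw [← h0]; simp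
    · apply mul_nonneg
      · have hx2 := hx.2
        have := hmono (show x ∈ Ioc 0 d from ⟨h0, by linarith⟩)
          (show x + p ∈ Ioc 0 d from ⟨by linarith, by linarith⟩) (by linarith)
        linarith
      · exact hsin j x hx.1 (by linarith [hx.2])
  -- nonnegativity of second piece
  have hB : ∀ (j : ℕ) (b : ℝ), 2*p*j + p ≤ b → b ≤ 2*p*j + 2*p → b ≤ d →
      0 ≤ ∫ x in (b-p)..(2*p*(j:ℝ)+p), f x * Real.sin (k*x) := by
    intro j b h1 h2 hbd
    have ha0 : (0:ℝ) ≤ 2*p*(j:ℝ) := by positivity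
    apply intervalIntegral.integral_nonneg (by linarith)
    intro x hx
    have hx1 : 2*p*(j:ℝ) ≤ x := le_trans (by linarith) hx.1
    rcases (ha0.trans hx1).eq_or_lt with h0 | h0
    · rw [← h0]; simp
    · exact mul_nonneg (hnonneg x ⟨h0, by linarith [hx.2]⟩) (hsin j x hx1 hx.2)
  -- pair nonnegativity
  have hpair : ∀ (j : ℕ) (b : ℝ), 2*p*j ≤ b → b ≤ 2*p*j + 2*p → b ≤ d →
      0 ≤ ∫ x in (2*p*(j:ℝ))..b, f x * Real.sin (k*x) := by
    intro j b hb1 hb2 hbd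
    have ha0 : (0:ℝ) ≤ 2*p*(j:ℝ) := by positivity
    by_cases hcase : b ≤ 2*p*j + p
    · apply intervalIntegral.integral_nonneg hb1
      intro x hx
      rcases (ha0.trans hx.1).eq_or_lt with h0 | h0
      · rw [← h0]; simp
      · exact mul_nonneg (hnonneg x ⟨h0, le_trans hx.2 hbd⟩)
          (hsin j x hx.1 (le_trans hx.2 hcase))
    · push_neg at hcase
      rw [hsplit j b hcase.le hb2 hbd]
      have := hA j b hcase.le hb2 hbd
      have := hB j b hcase.le hb2 hbd
      linarith
  -- main induction
  have hmain : ∀ n : ℕ, ∀ j : ℕ, 2*p*j ≤ d → d ≤ 2*p*j + 2*p*(n+1) →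
      0 ≤ ∫ x in (2*p*(j:ℝ))..d, f x * Real.sin (k*x) := by
    intro n
    induction n with
    | zero => intro j h1 h2; exact hpair j d h1 (by push_cast at h2 ⊢; linarith) le_rfl
    | succ n ih =>
      intro j h1 h2
      by_cases hc : d ≤ 2*p*j + 2*p
      · exact hpair j d h1 hc le_rfl
      · push_neg at hc
        have ha0 : (0:ℝ) ≤ 2*p*(j:ℝ) := by positivity
        have hadd := integral_add_adjacent_intervals (μ := volume)
          (hII (2*p*(j:ℝ)) (2*p*(j:ℝ)+2*p) ha0 (by linarith) hc.le)
          (hII (2*p*(j:ℝ)+2*p) d (by linarith) hc.le le_rfl)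
        have h2' := ih (j+1) (by push_cast; linarith) (by push_cast at h2 ⊢; linarith)
        rw [show ((j+1:ℕ):ℝ) = (j:ℝ)+1 by push_cast; ring] at h2'
        rw [show 2*p*((j:ℝ)+1) = 2*p*(j:ℝ)+2*p by ring] at h2'
        have h1' := hpair j (2*p*(j:ℝ)+2*p) (by linarith) le_rfl hc.le
        linarith
  obtain ⟨n, hn⟩ := exists_nat_gt (d/(2*p))
  have hdn : d ≤ 2*p*(n+1) := by
    have := (div_lt_iff₀ (by positivity)).mp hn
    nlinarith
  constructor
  · rw [← intervalIntegral.integral_of_le hd.le]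
    have := hmain n 0 (by push_cast; linarith) (by push_cast; linarith)
    simpa using this
  · intro hstrict
    have hfpos : ∀ x ∈ Ioo (0:ℝ) d, 0 < f x := by
      intro x hx
      have hy : (x+d)/2 ∈ Ioo (0:ℝ) d := ⟨by linarith [hx.1, hx.2], by linarith [hx.2]⟩
      have h1 := hstrict hx hy (by linarith [hx.2])
      have h2 := hnonneg _ ⟨hy.1, hy.2.le⟩
      linarith
    rw [← intervalIntegral.integral_of_le hd.le]
    by_cases hc2 : d < 2*p
    · by_cases hc1 : d ≤ p
      · apply intervalIntegral_pos_of_pos_on (hII 0 d le_rfl hd.le le_rfl) _ hd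
        intro x hx
        exact mul_pos (hfpos x hx) (hsinpos x hx.1 (lt_of_lt_of_le hx.2 hc1))
      · push_neg at hc1
        have hs := hsplit 0 d (by push_cast; linarith) (by push_cast; linarith) le_rfl
        simp only [Nat.cast_zero, mul_zero, zero_add] at hs
        rw [hs]
        have hA' := hA 0 d (by push_cast; linarith) (by push_cast; linarith) le_rfl
        simp only [Nat.cast_zero, mul_zero, zero_add] at hA'
        have hB' : 0 < ∫ x in (d-p)..p, f x * Real.sin (k*x) := by
          apply intervalIntegral_pos_of_pos_on
            (hII (d-p) p (by linarith) (by linarith) (by linarith)) _ (by linarith)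
          intro x hx
          exact mul_pos (hfpos x ⟨by linarith [hx.1], by linarith [hx.2]⟩)
            (hsinpos x (by linarith [hx.1]) hx.2)
        linarith
    · push_neg at hc2
      have hadd := integral_add_adjacent_intervals (μ := volume)
        (hII 0 (2*p) le_rfl (by linarith) hc2)
        (hII (2*p) d (by linarith) hc2 le_rfl)
      have hs := hsplit 0 (2*p) (by push_cast; linarith) (by push_cast; linarith) hc2
      simp only [Nat.cast_zero, mul_zero, zero_add] at hs
      rw [show 2*p - p = p by ring, intervalIntegral.integral_same] at hs
      have hfirst : 0 < ∫ x in (0:ℝ)..p, (f x - f (x+p)) * Real.sin (k*x) := by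
        have iint : IntervalIntegrable (fun x => (f x - f (x+p)) * Real.sin (k*x)) volume 0 p := by
          have h1 := (hII 0 p le_rfl hp0.le (by linarith)).sub
            (hIIs 0 p le_rfl hp0.le (by linarith))
          have e : (fun x => f x * Real.sin (k*x) - f (x+p) * Real.sin (k*x))
              = fun x => (f x - f (x+p)) * Real.sin (k*x) := by funext x; ring
          rwa [e] at h1
        apply intervalIntegral_pos_of_pos_on iint _ hp0
        intro x hx
        apply mul_pos _ (hsinpos x hx.1 hx.2)
        have := hstrict (show x ∈ Ioo (0:ℝ) d from ⟨hx.1, by linarith [hx.2]⟩)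
          (show x + p ∈ Ioo (0:ℝ) d from ⟨by linarith [hx.1], by linarith [hx.2]⟩)
          (by linarith)
        linarith
      have htail : 0 ≤ ∫ x in (2*p)..d, f x * Real.sin (k*x) := by
        have := hmain n 1 (by push_cast; linarith) (by push_cast; nlinarith)
        simpa using this
      linarith

/-- Let `d > 0` and `f : (0,d] → [0,∞)` be nonincreasing with
`λ ↦ λ f(λ)` integrable on `(0,d)`. Then for every `k > 0` the integral
`∫_0^d f(λ) sin(kλ) dλ` converges absolutely and is `≥ 0`; if moreover `f` is
strictly decreasing, the integral is strictly positive. -/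
theorem statement13 (d : ℝ) (hd : 0 < d) (f : ℝ → ℝ)
    (hmono : AntitoneOn f (Ioc 0 d)) (hnonneg : ∀ lam ∈ Ioc (0 : ℝ) d, 0 ≤ f lam)
    (hint : IntegrableOn (fun lam => lam * f lam) (Ioo 0 d)) :
    ∀ k : ℝ, 0 < k →
      IntegrableOn (fun lam => f lam * Real.sin (k * lam)) (Ioc 0 d) ∧
      0 ≤ (∫ lam in Ioc (0 : ℝ) d, f lam * Real.sin (k * lam)) ∧
      (StrictAntiOn f (Ioo 0 d) →
        0 < ∫ lam in Ioc (0 : ℝ) d, f lam * Real.sin (k * lam)) := by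
  intro k hk
  have Hint := statement13_int d hd f hmono hnonneg hint k hk
  exact ⟨Hint, statement13_aux d hd f hmono hnonneg k hk Hint⟩
end

section
/- Let d > 0 and a₀(t) = (3/4)t⁴ − (8/3)t³ + 3t². Then for every k > 0: ∫_0^d [ log(d/λ) − a₀(λ/d) + a₀(1) ] cos(kλ) dλ > 0. -/
open Real

noncomputable section

open Set Filter MeasureTheory intervalIntegral Topology

namespace S14

def Kf (d lam : ℝ) : ℝ := Real.log (d / lam) - a0 (lam / d) + a0 1
def gf (d lam : ℝ) : ℝ := 1 / lam + (3 * (lam/d)^3 - 8 * (lam/d)^2 + 6 * (lam/d)) / d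
def hf (d lam : ℝ) : ℝ := 1 / lam^2 - (9 * (lam/d)^2 - 16 * (lam/d) + 6) / d^2
def Phi (d k lam : ℝ) : ℝ :=
  Kf d lam * Real.sin (k*lam) / k + gf d lam * (1 - Real.cos (k*lam)) / k^2
def psi (d k lam : ℝ) : ℝ := hf d lam * (1 - Real.cos (k*lam)) / k^2

lemma hasDerivAt_Kf {d x : ℝ} (hd : 0 < d) (hx : 0 < x) :
    HasDerivAt (Kf d) (-(gf d x)) x := by
  have h1 : HasDerivAt (fun y : ℝ => d / y) (-(d / x ^ 2)) x := by
    simpa [div_eq_mul_inv, mul_comm] using (hasDerivAt_inv hx.ne').const_mul d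
  have h2 : HasDerivAt (fun y : ℝ => Real.log (d / y)) (-(d / x ^ 2) / (d / x)) x :=
    h1.log (by positivity)
  have h3 : HasDerivAt (fun y : ℝ => y / d) (1 / d) x := by
    simpa using (hasDerivAt_id x).div_const d
  have h4 : HasDerivAt (fun y : ℝ => a0 (y / d))
      ((3 * (x/d)^3 - 8 * (x/d)^2 + 6 * (x/d)) * (1/d)) x := by
    have p4 : HasDerivAt (fun y : ℝ => (y/d) ^ 4) ((4:ℕ) * (x/d)^3 * (1/d)) x := h3.pow 4
    have p3 : HasDerivAt (fun y : ℝ => (y/d) ^ 3) ((3:ℕ) * (x/d)^2 * (1/d)) x := h3.pow 3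
    have p2 : HasDerivAt (fun y : ℝ => (y/d) ^ 2) ((2:ℕ) * (x/d)^1 * (1/d)) x := h3.pow 2
    have := ((p4.const_mul (3/4:ℝ)).sub (p3.const_mul (8/3:ℝ))).add (p2.const_mul (3:ℝ))
    refine this.congr_deriv ?_
    push_cast; ring
  have := (h2.sub h4).add_const (a0 1)
  refine this.congr_deriv ?_
  simp only [gf]
  field_simp
  ring

lemma hasDerivAt_gf {d x : ℝ} (hd : 0 < d) (hx : 0 < x) :
    HasDerivAt (gf d) (-(hf d x)) x := by
  have h3 : HasDerivAt (fun y : ℝ => y / d) (1 / d) x := by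
    simpa using (hasDerivAt_id x).div_const d
  have p3 : HasDerivAt (fun y : ℝ => (y/d) ^ 3) ((3:ℕ) * (x/d)^2 * (1/d)) x := h3.pow 3
  have p2 : HasDerivAt (fun y : ℝ => (y/d) ^ 2) ((2:ℕ) * (x/d)^1 * (1/d)) x := h3.pow 2
  have hinv : HasDerivAt (fun y : ℝ => 1 / y) (-(1/x^2)) x := by
    simpa [one_div] using hasDerivAt_inv hx.ne'
  have := hinv.add ((((p3.const_mul (3:ℝ)).sub (p2.const_mul (8:ℝ))).add
      (h3.const_mul (6:ℝ))).div_const d)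
  refine this.congr_deriv ?_
  simp only [hf]
  push_cast
  field_simp
  ring

lemma hasDerivAt_Phi {d k x : ℝ} (hd : 0 < d) (hk : 0 < k) (hx : 0 < x) :
    HasDerivAt (Phi d k) (Kf d x * Real.cos (k*x) - psi d k x) x := by
  have hs : HasDerivAt (fun y : ℝ => Real.sin (k*y)) (Real.cos (k*x) * k) x := by
    simpa using ((hasDerivAt_id x).const_mul k).sin
  have hc : HasDerivAt (fun y : ℝ => 1 - Real.cos (k*y)) (Real.sin (k*x) * k) x := by
    simpa [Pi.sub_def] using ((hasDerivAt_const x (1:ℝ)).sub ((hasDerivAt_id x).const_mul k).cos)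
  have h1 := (((hasDerivAt_Kf hd hx).mul hs).div_const k).add
    ((((hasDerivAt_gf hd hx).mul hc)).div_const (k^2))
  refine h1.congr_deriv ?_
  simp only [psi]
  field_simp
  ring

lemma hf_pos {d x : ℝ} (hd : 0 < d) (hx : 0 < x) (hxd : x ≤ d) : 0 < hf d x := by
  have key : hf d x = (d^4 - 9*x^4 + 16*x^3*d - 6*x^2*d^2) / (x^2 * d^4) := by
    simp only [hf]; field_simp; ring
  rw [key]
  apply div_pos _ (by positivity)
  have hu0 : 0 ≤ d - x := sub_nonneg.2 hxd
  have hud : d - x ≤ d := by linarith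
  have h9 : 0 ≤ 8/3*d^2 + 8*d*(d-x) - 9*(d-x)^2 := by
    nlinarith [mul_nonneg hu0 hx.le, mul_le_mul_of_nonneg_left hud hd.le]
  nlinarith [mul_nonneg (sq_nonneg (d - x - 2*d/3)) h9, pow_pos hd 4]
lemma tendsto_Phi_zero {d k : ℝ} (hd : 0 < d) (hk : 0 < k) :
    Tendsto (Phi d k) (𝓝[>] (0:ℝ)) (𝓝 0) := by
  have hslope_sin : Tendsto (fun x : ℝ => Real.sin (k*x)/x) (𝓝[>](0:ℝ)) (𝓝 k) := by
    have hder : HasDerivAt (fun y : ℝ => Real.sin (k*y)) k 0 := by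
      simpa using ((hasDerivAt_id (0:ℝ)).const_mul k).sin
    have := (hasDerivAt_iff_tendsto_slope.1 hder).mono_left
      (nhdsWithin_mono 0 (fun y hy => (ne_of_gt (show (0:ℝ) < y from hy) : y ≠ 0)))
    apply this.congr'
    filter_upwards [self_mem_nhdsWithin] with y hy
    simp [slope_def_field, div_eq_div_iff (ne_of_gt (show (0:ℝ) < y from hy))]
  have hslope_cos : Tendsto (fun x : ℝ => (1 - Real.cos (k*x))/x) (𝓝[>](0:ℝ)) (𝓝 0) := by
    have hder : HasDerivAt (fun y : ℝ => 1 - Real.cos (k*y)) 0 0 := by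
      simpa [Pi.sub_def] using ((hasDerivAt_const (0:ℝ) (1:ℝ)).sub ((hasDerivAt_id (0:ℝ)).const_mul k).cos)
    have := (hasDerivAt_iff_tendsto_slope.1 hder).mono_left
      (nhdsWithin_mono 0 (fun y hy => (ne_of_gt (show (0:ℝ) < y from hy) : y ≠ 0)))
    apply this.congr'
    filter_upwards [self_mem_nhdsWithin] with y hy
    simp [slope_def_field]
  have hlog : Tendsto (fun x : ℝ => x * Real.log x) (𝓝[>](0:ℝ)) (𝓝 0) := by
    have := Real.continuous_mul_log.tendsto 0
    simpa using this.mono_left nhdsWithin_le_nhds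
  have hA : Tendsto (fun x : ℝ => (Real.log d - a0 (x/d) + a0 1) * Real.sin (k*x))
      (𝓝[>](0:ℝ)) (𝓝 0) := by
    have hcont : Continuous fun x : ℝ => (Real.log d - a0 (x/d) + a0 1) * Real.sin (k*x) := by
      simp only [a0]; fun_prop
    have := hcont.tendsto 0
    simpa using this.mono_left nhdsWithin_le_nhds
  have hB : Tendsto (fun x : ℝ => (x * Real.log x) * (Real.sin (k*x)/x)) (𝓝[>](0:ℝ)) (𝓝 0) := by
    simpa using hlog.mul hslope_sin
  have hD : Tendsto (fun x : ℝ => ((3*(x/d)^3-8*(x/d)^2+6*(x/d))/d) * (1 - Real.cos (k*x)))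
      (𝓝[>](0:ℝ)) (𝓝 0) := by
    have hcont : Continuous fun x : ℝ => ((3*(x/d)^3-8*(x/d)^2+6*(x/d))/d) * (1 - Real.cos (k*x)) := by
      fun_prop
    have := hcont.tendsto 0
    simpa using this.mono_left nhdsWithin_le_nhds
  have hT := ((hA.sub hB).div_const k).add ((hslope_cos.add hD).div_const (k^2))
  simp only [sub_zero, add_zero, zero_div, zero_add] at hT
  apply hT.congr'
  filter_upwards [self_mem_nhdsWithin] with x hx
  have hx0 : (x:ℝ) ≠ 0 := ne_of_gt hx
  have e1 : x * Real.log x * (Real.sin (k*x)/x) = Real.log x * Real.sin (k*x) := by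
    field_simp
  rw [e1]
  simp only [Phi, Kf, gf]
  rw [Real.log_div hd.ne' hx0]
  field_simp
  ring
lemma log_integrableOn {d : ℝ} (hd : 0 < d) : IntegrableOn Real.log (Ioc 0 d) := by
  set c := min d 1 with hc
  have hc0 : 0 < c := lt_min hd one_pos
  have h1 : IntegrableOn (fun x : ℝ => -Real.log x) (Ioc 0 c) := by
    apply intervalIntegral.integrableOn_deriv_of_nonneg
      (g := fun x : ℝ => x - x * Real.log x)
    · exact (continuous_id.sub Real.continuous_mul_log).continuousOn
    · intro x hx
      have := (hasDerivAt_id x).sub (Real.hasDerivAt_mul_log (ne_of_gt hx.1))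
      refine this.congr_deriv ?_
      ring
    · intro x hx
      simp only [neg_nonneg]
      exact Real.log_nonpos hx.1.le (hx.2.le.trans (min_le_right d 1))
  have h2 : IntegrableOn Real.log (Ioc 0 c) := by
    exact h1.neg.congr (Filter.Eventually.of_forall fun x => by simp)
  have h3 : IntegrableOn Real.log (Icc c d) :=
    ((Real.continuousOn_log.mono (fun x hx => by
      have : (0:ℝ) < x := lt_of_lt_of_le hc0 hx.1
      simpa using this.ne'))).integrableOn_Icc
  have : Ioc (0:ℝ) d ⊆ Ioc 0 c ∪ Icc c d := by
    intro x hx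
    rcases le_or_gt x c with h | h
    · exact Or.inl ⟨hx.1, h⟩
    · exact Or.inr ⟨h.le, hx.2⟩
  exact (h2.union h3).mono_set this

lemma psi_intervalIntegrable {d k : ℝ} (hd : 0 < d) (hk : 0 < k) :
    IntervalIntegrable (psi d k) volume 0 d := by
  rw [intervalIntegrable_iff_integrableOn_Ioc_of_le hd.le]
  have m2 : Measurable fun x : ℝ => x/d := measurable_id.div_const d
  have m1 : Measurable fun x : ℝ => 1/x^2 :=
    measurable_const.div (measurable_id.pow_const 2)
  have mq : Measurable fun x : ℝ => (9*(x/d)^2 - 16*(x/d) + 6)/d^2 :=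
    ((((m2.pow_const 2).const_mul 9).sub (m2.const_mul 16)).add_const 6).div_const _
  have mcos : Measurable fun x : ℝ => 1 - Real.cos (k*x) :=
    measurable_const.sub (Real.measurable_cos.comp (measurable_id.const_mul k))
  have hmeas : Measurable (psi d k) := (((m1.sub mq).mul mcos).div_const _)
  apply Integrable.mono' (integrable_const ((k^2/2 + 62/d^2)/k^2))
    hmeas.aestronglyMeasurable
  filter_upwards [ae_restrict_mem measurableSet_Ioc] with x hx
  have hx0 : 0 < x := hx.1
  have hcos1 : Real.cos (k*x) ≤ 1 := Real.cos_le_one _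
  have hcos2 : 1 - (k*x)^2/2 ≤ Real.cos (k*x) := Real.one_sub_sq_div_two_le_cos
  have hcosm : -1 ≤ Real.cos (k*x) := Real.neg_one_le_cos _
  have htd : 0 ≤ x/d ∧ x/d ≤ 1 := ⟨by positivity, (div_le_one hd).2 hx.2⟩
  have hq : |9 * (x/d)^2 - 16 * (x/d) + 6| ≤ 31 := by
    rw [abs_le]; constructor <;> nlinarith [htd.1, htd.2, sq_nonneg (x/d)]
  have hb1 : (1 - Real.cos (k*x)) / x^2 ≤ k^2/2 := by
    rw [div_le_iff₀ (by positivity)]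
    nlinarith
  have hb0 : 0 ≤ 1 - Real.cos (k*x) := by linarith
  have hbound : |hf d x * (1 - Real.cos (k*x))| ≤ k^2/2 + 62/d^2 := by
    have expand : hf d x * (1 - Real.cos (k*x)) =
        (1 - Real.cos (k*x))/x^2 - (9 * (x/d)^2 - 16 * (x/d) + 6)/d^2 * (1 - Real.cos (k*x)) := by
      simp only [hf]; ring
    rw [expand]
    have h2' : |(9 * (x/d)^2 - 16 * (x/d) + 6)/d^2 * (1 - Real.cos (k*x))| ≤ 31/d^2 * 2 := by
      rw [abs_mul, abs_div, abs_of_nonneg (by positivity : (0:ℝ) ≤ d^2),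
        abs_of_nonneg hb0]
      apply mul_le_mul _ (by linarith) hb0 (by positivity)
      exact (div_le_div_iff_of_pos_right (by positivity)).2 hq
    have e62 : (31:ℝ)/d^2*2 = 62/d^2 := by ring
    rw [e62] at h2'
    have hA : |(1 - Real.cos (k*x))/x^2| ≤ k^2/2 := by
      rw [abs_of_nonneg (by positivity)]; exact hb1
    rw [abs_le] at h2' hA ⊢
    constructor
    · linarith [h2'.2, hA.1]
    · linarith [h2'.1, hA.2]
  calc ‖psi d k x‖ = |hf d x * (1 - Real.cos (k*x))| / k^2 := by
        rw [Real.norm_eq_abs]; unfold psi; rw [abs_div, abs_of_nonneg (by positivity : (0:ℝ) ≤ k^2)]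
    _ ≤ (k^2/2 + 62/d^2)/k^2 := by gcongr

lemma Kcos_intervalIntegrable {d k : ℝ} (hd : 0 < d) :
    IntervalIntegrable (fun x => Kf d x * Real.cos (k*x)) volume 0 d := by
  rw [intervalIntegrable_iff_integrableOn_Ioc_of_le hd.le]
  have ca0 : Continuous a0 := by unfold a0; fun_prop
  have mK : Measurable (Kf d) :=
    ((Real.measurable_log.comp (measurable_const.div measurable_id)).sub
      (ca0.measurable.comp (measurable_id.div_const d))).add_const _
  have hmeas : Measurable fun x => Kf d x * Real.cos (k*x) :=
    mK.mul (Real.measurable_cos.comp (measurable_id.const_mul k))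
  have hgint : IntegrableOn (fun x : ℝ => |Real.log x| + (|Real.log d| + 9)) (Ioc 0 d) :=
    (log_integrableOn hd).abs.add (integrableOn_const measure_Ioc_lt_top.ne)
  apply Integrable.mono' hgint hmeas.aestronglyMeasurable
  filter_upwards [ae_restrict_mem measurableSet_Ioc] with x hx
  have hx0 : 0 < x := hx.1
  have htd : 0 ≤ x/d ∧ x/d ≤ 1 := ⟨by positivity, (div_le_one hd).2 hx.2⟩
  have ha0 : |a0 (x/d)| ≤ 7 := by
    rw [abs_le]; unfold a0
    constructor <;> nlinarith [htd.1, htd.2, sq_nonneg (x/d), pow_le_one₀ htd.1 htd.2 (n := 3),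
      pow_le_one₀ htd.1 htd.2 (n := 4), pow_nonneg htd.1 3, pow_nonneg htd.1 4]
  have ha1 : |a0 1| ≤ 2 := by rw [abs_le]; unfold a0; norm_num
  have hlog : |Real.log (d/x)| ≤ |Real.log d| + |Real.log x| := by
    rw [Real.log_div hd.ne' hx0.ne']
    exact (abs_sub _ _)
  calc ‖Kf d x * Real.cos (k*x)‖ = |Kf d x| * |Real.cos (k*x)| := abs_mul _ _
    _ ≤ |Kf d x| * 1 := by
        apply mul_le_mul_of_nonneg_left (Real.abs_cos_le_one _) (abs_nonneg _)
    _ ≤ |Real.log x| + (|Real.log d| + 9) := by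
        rw [mul_one]
        have : |Kf d x| ≤ |Real.log (d/x)| + |a0 (x/d)| + |a0 1| := by
          unfold Kf
          exact (abs_add_le _ _).trans (by gcongr; exact abs_sub _ _)
        linarith

private theorem statement14_aux (d : ℝ) (hd : 0 < d) (k : ℝ) (hk : 0 < k) :
    0 < ∫ lam in (0 : ℝ)..d,
        (Real.log (d / lam) - a0 (lam / d) + a0 1) * Real.cos (k * lam) := by
  show 0 < ∫ lam in (0:ℝ)..d, Kf d lam * Real.cos (k * lam)
  set m := min d (π/k) with hm
  have hm0 : 0 < m := lt_min hd (by positivity)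
  have hmd : m ≤ d := min_le_left _ _
  have hψ : IntervalIntegrable (psi d k) volume 0 d := psi_intervalIntegrable hd hk
  have hψ1 : IntervalIntegrable (psi d k) volume 0 m := by
    apply hψ.mono_set
    rw [uIcc_of_le hm0.le, uIcc_of_le hd.le]
    exact Icc_subset_Icc le_rfl hmd
  have hψ2 : IntervalIntegrable (psi d k) volume m d := by
    apply hψ.mono_set
    rw [uIcc_of_le hmd, uIcc_of_le hd.le]
    exact Icc_subset_Icc hm0.le le_rfl
  have hK : IntervalIntegrable (fun x => Kf d x * Real.cos (k*x)) volume 0 d :=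
    Kcos_intervalIntegrable hd
  have hφ : IntervalIntegrable (fun x => Kf d x * Real.cos (k*x) - psi d k x) volume 0 d :=
    hK.sub hψ
  have hsplit : (∫ lam in (0:ℝ)..d, Kf d lam * Real.cos (k * lam))
      = (∫ x in (0:ℝ)..d, (Kf d x * Real.cos (k*x) - psi d k x)) + ∫ x in (0:ℝ)..d, psi d k x := by
    rw [← intervalIntegral.integral_add hφ hψ]
    apply intervalIntegral.integral_congr
    intro x _
    ring
  have hend : Tendsto (Phi d k) (𝓝[<] d) (𝓝 (Phi d k d)) :=
    ((hasDerivAt_Phi hd hk hd).continuousAt.tendsto).mono_left nhdsWithin_le_nhds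
  have key : (∫ x in (0:ℝ)..d, (Kf d x * Real.cos (k*x) - psi d k x)) = Phi d k d - 0 :=
    intervalIntegral.integral_eq_sub_of_hasDerivAt_of_tendsto hd
      (fun x hx => hasDerivAt_Phi hd hk hx.1) hφ (tendsto_Phi_zero hd hk) hend
  have hPhid : 0 ≤ Phi d k d := by
    have hK0 : Kf d d = 0 := by
      simp [Kf, div_self hd.ne']
    have h1c : 0 ≤ 1 - Real.cos (k*d) := by linarith [Real.cos_le_one (k*d)]
    have hg0 : 0 ≤ gf d d := by
      rw [gf, div_self hd.ne']
      positivity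
    rw [Phi, hK0]
    simp only [zero_mul, zero_div, zero_add]
    exact div_nonneg (mul_nonneg hg0 h1c) (sq_nonneg k)
  have pos1 : 0 < ∫ x in (0:ℝ)..m, psi d k x := by
    apply intervalIntegral.intervalIntegral_pos_of_pos_on hψ1 _ hm0
    intro x hx
    have hxd : x ≤ d := le_trans hx.2.le hmd
    have hkx : 0 < k * x := mul_pos hk hx.1
    have hkxπ : k * x < π := by
      have : x < π/k := lt_of_lt_of_le hx.2 (min_le_right _ _)
      calc k * x < k * (π/k) := by exact mul_lt_mul_of_pos_left this hk
        _ = π := by field_simp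
    have hcosne : Real.cos (k*x) ≠ 1 := by
      intro h
      have h2π : k*x = 0 := by
        rw [← Real.cos_eq_one_iff_of_lt_of_lt (by nlinarith [Real.pi_pos]) (by nlinarith [Real.pi_pos])]
        exact h
      linarith
    have h1c : 0 < 1 - Real.cos (k*x) :=
      sub_pos.2 (lt_of_le_of_ne (Real.cos_le_one _) hcosne)
    rw [psi]
    exact div_pos (mul_pos (hf_pos hd hx.1 hxd) h1c) (by positivity)
  have nonneg2 : 0 ≤ ∫ x in m..d, psi d k x := by
    apply intervalIntegral.integral_nonneg hmd
    intro x hx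
    have hx0 : 0 < x := lt_of_lt_of_le hm0 hx.1
    have h1c : 0 ≤ 1 - Real.cos (k*x) := by linarith [Real.cos_le_one (k*x)]
    rw [psi]
    exact div_nonneg (mul_nonneg (hf_pos hd hx0 hx.2).le h1c) (by positivity)
  have hψsplit : (∫ x in (0:ℝ)..d, psi d k x)
      = (∫ x in (0:ℝ)..m, psi d k x) + ∫ x in m..d, psi d k x :=
    (intervalIntegral.integral_add_adjacent_intervals hψ1 hψ2).symm
  rw [hsplit, key, hψsplit]
  linarith

end S14

/-- For every `d > 0` and every `k > 0`:
`∫_0^d [log(d/λ) − a₀(λ/d) + a₀(1)] cos(kλ) dλ > 0`. -/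
theorem statement14 (d : ℝ) (hd : 0 < d) (k : ℝ) (hk : 0 < k) :
    0 < ∫ lam in (0 : ℝ)..d,
        (Real.log (d / lam) - a0 (lam / d) + a0 1) * Real.cos (k * lam) :=
  S14.statement14_aux d hd k hk
end
end
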